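/- arXiv:1905.07429 — 7 statements merged into one kernel-verified Lean document; each statement's English description precedes it below -/
import Mathlib

section
/- Let T be a triangulated category with a non-degenerate t-structure. Let (j_{−k,−k−1} : X_{−k} → X_{−k−1})_{k≥0} be a sequence of morphisms in T such that the coproduct ⊕_k X_{−k} exists in T, and let X = hocolim_k X_{−k} with the canonical morphisms j_{−k} : X_{−k} → X. Assume that for every n ≥ 0 the induced morphism H^i(j_{−n,−n−1}) : H^i(X_{−n}) → H^i(X_{−n−1}) is an isomorphism for all i > −n and an epimorphism for i = −n. Then for every n ≥ 0 the induced morphism H^i(j_{−n}) : H^i(X_{−n}) → H^i(X) is an isomorphism for all i > −n and an epimorphism for i = −n. -/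
open CategoryTheory Category Limits Pretriangulated Triangulated

universe v u v' u'

section Aux

variable {C : Type u} [Category.{v} C]

/-- Auxiliary: composite of consecutive maps in a sequence. -/
def chainCmp (X : ℕ → C) (j : ∀ k : ℕ, X k ⟶ X (k + 1)) : ∀ (i k : ℕ), X k ⟶ X (k + i)
  | 0, _ => 𝟙 _
  | (i+1), k => chainCmp X j i k ≫ j (k + i)

lemma jcast (X : ℕ → C) (j : ∀ k : ℕ, X k ⟶ X (k + 1)) {a b : ℕ} (h : a = b)
    (h1 : X (a+1) = X (b+1)) (h2 : X a = X b) :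
    j a ≫ eqToHom h1 = eqToHom h2 ≫ j b := by subst h; simp

lemma chainDescend (X : ℕ → C) (j : ∀ k : ℕ, X k ⟶ X (k + 1)) (n : ℕ) {Z : C}
    (up : ∀ m : ℕ, X (n + m) ⟶ Z) (upspec : ∀ m, j (n + m) ≫ up (m + 1) = up m) :
    ∀ (m l lm : ℕ) (_ : l + m = lm) (h2 : X (n + l + m) = X (n + lm)),
      chainCmp X j m (n + l) ≫ eqToHom h2 ≫ up lm = up l := by
  intro m
  induction m with
  | zero =>
      intro l lm hlm h2
      subst hlm
      simp [chainCmp]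
  | succ m ih =>
      intro l lm hlm h2
      subst hlm
      have hab : n + l + m = n + (l + m) := by omega
      have e1 : j (n + l + m) ≫ eqToHom h2 = eqToHom (congrArg X hab) ≫ j (n + (l + m)) :=
        jcast X j hab h2 (congrArg X hab)
      have key : j (n + l + m) ≫ eqToHom h2 ≫ up (l + m + 1)
          = eqToHom (congrArg X hab) ≫ up (l + m) := by
        rw [← assoc, e1, assoc, upspec (l + m)]
      show (chainCmp X j m (n + l) ≫ j (n + l + m)) ≫ eqToHom h2 ≫ up (l + m + 1) = up l
      rw [assoc, key]
      exact ih l (l + m) rfl _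

lemma chainSucc (X : ℕ → C) (j : ∀ k : ℕ, X k ⟶ X (k + 1)) :
    ∀ (m k b : ℕ) (_ : k + (m+1) = b) (_ : (k+1) + m = b)
      (e₁ : X (k + (m+1)) = X b) (e₂ : X ((k+1) + m) = X b),
      chainCmp X j (m+1) k ≫ eqToHom e₁ = j k ≫ chainCmp X j m (k+1) ≫ eqToHom e₂ := by
  intro m
  induction m with
  | zero =>
      intro k b h₁ h₂ e₁ e₂
      subst h₁
      show (chainCmp X j 0 k ≫ j (k+0)) ≫ eqToHom e₁ = j k ≫ chainCmp X j 0 (k+1) ≫ eqToHom e₂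
      simp [chainCmp]
  | succ m ih =>
      intro k b h₁ h₂ e₁ e₂
      subst h₁
      have h3 : (k+1) + m = k + (m+1) := by omega
      have ih' : chainCmp X j (m+1) k ≫ eqToHom (rfl : X (k + (m+1)) = X (k + (m+1)))
          = j k ≫ chainCmp X j m (k+1) ≫ eqToHom (congrArg X h3) :=
        ih k (k+(m+1)) rfl h3 rfl (congrArg X h3)
      have ih'' : chainCmp X j (m+1) k
          = j k ≫ chainCmp X j m (k+1) ≫ eqToHom (congrArg X h3) := by
        simpa using ih'
      show (chainCmp X j (m+1) k ≫ j (k+(m+1))) ≫ eqToHom e₁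
        = j k ≫ (chainCmp X j (m+1) (k+1)) ≫ eqToHom e₂
      rw [ih'']
      have e3 : eqToHom (congrArg X h3) ≫ j (k + (m+1))
          = j ((k+1)+m) ≫ eqToHom (congrArg X (congrArg (· + 1) h3)) :=
        (jcast X j h3 (congrArg X (congrArg (· + 1) h3)) (congrArg X h3)).symm
      show ((j k ≫ chainCmp X j m (k+1) ≫ eqToHom (congrArg X h3)) ≫ j (k+(m+1))) ≫ eqToHom e₁
        = j k ≫ (chainCmp X j m (k+1) ≫ j ((k+1)+m)) ≫ eqToHom e₂
      have final : eqToHom (congrArg X h3) ≫ j (k+(m+1)) ≫ eqToHom e₁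
          = j ((k+1)+m) ≫ eqToHom e₂ := by
        rw [← assoc, e3, assoc]
        simp
      simp only [assoc]
      exact congrArg (fun t => j k ≫ chainCmp X j m (k+1) ≫ t) final

lemma chainAtN (X : ℕ → C) (j : ∀ k : ℕ, X k ⟶ X (k + 1)) (n : ℕ) {Z : C}
    (up : ∀ m : ℕ, X (n + m) ⟶ Z) (upspec : ∀ m, j (n + m) ≫ up (m + 1) = up m) :
    chainCmp X j n n ≫ eqToHom (congrArg X (Nat.add_comm n n)) ≫ up n = up 0 :=
  chainDescend X j n up upspec n 0 n (Nat.zero_add n) (congrArg X (by omega))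

lemma chainCompat (X : ℕ → C) (j : ∀ k : ℕ, X k ⟶ X (k + 1)) (n : ℕ) {Z : C}
    (up : ∀ m : ℕ, X (n + m) ⟶ Z) (upspec : ∀ m, j (n + m) ≫ up (m + 1) = up m) (k : ℕ) :
    chainCmp X j n k ≫ eqToHom (congrArg X (Nat.add_comm k n)) ≫ up k
    = j k ≫ chainCmp X j n (k+1) ≫ eqToHom (congrArg X (Nat.add_comm (k+1) n)) ≫ up (k+1) := by
  rw [← upspec k]
  have e2 : eqToHom (congrArg X (Nat.add_comm k n)) ≫ j (n+k)
      = j (k+n) ≫ eqToHom (congrArg X (congrArg (· + 1) (Nat.add_comm k n))) :=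
    (jcast X j (Nat.add_comm k n) _ _).symm
  have e4 := chainSucc X j n k (n+(k+1)) (by omega) (by omega)
      (congrArg X (by omega : k + (n+1) = n + (k+1)))
      (congrArg X (by omega : (k+1) + n = n + (k+1)))
  calc chainCmp X j n k ≫ eqToHom (congrArg X (Nat.add_comm k n)) ≫ (j (n+k) ≫ up (k+1))
      = (chainCmp X j n k ≫ (eqToHom (congrArg X (Nat.add_comm k n)) ≫ j (n+k))) ≫ up (k+1) := by
        simp only [assoc]
    _ = (chainCmp X j n k ≫ (j (k+n)
          ≫ eqToHom (congrArg X (congrArg (· + 1) (Nat.add_comm k n))))) ≫ up (k+1) := by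
        rw [e2]
    _ = (chainCmp X j (n+1) k
          ≫ eqToHom (congrArg X (by omega : k + (n+1) = n + (k+1)))) ≫ up (k+1) := by
        rw [show chainCmp X j (n+1) k = chainCmp X j n k ≫ j (k+n) from rfl]
        simp only [assoc]
    _ = (j k ≫ chainCmp X j n (k+1)
          ≫ eqToHom (congrArg X (by omega : (k+1)+n = n+(k+1)))) ≫ up (k+1) := by rw [e4]
    _ = j k ≫ chainCmp X j n (k+1) ≫ eqToHom (congrArg X (Nat.add_comm (k+1) n)) ≫ up (k+1) := by
        simp only [assoc]

lemma mlDown [Preadditive C] (G : ℕ → C) (g : ∀ k : ℕ, G k ⟶ G (k+1))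
    {Z : C} : ∀ (m : ℕ) (fam : ∀ k : ℕ, G k ⟶ Z), (∀ k, m ≤ k → fam k = 0) →
    ∃ u : ∀ k : ℕ, G k ⟶ Z, ∀ k, u k - g k ≫ u (k+1) = fam k := by
  intro m
  induction m with
  | zero =>
      intro fam hfam
      refine ⟨fun _ => 0, fun k => by rw [hfam k (Nat.zero_le k)]; simp⟩
  | succ m ih =>
      intro fam hfam
      set v : ∀ k : ℕ, G k ⟶ Z := fun k =>
        if h : k = m then eqToHom (congrArg G h) ≫ fam m else 0 with hv
      have vm : v m = fam m := by simp [hv]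
      have vne : ∀ k, k ≠ m → v k = 0 := fun k h => by simp [hv, h]
      obtain ⟨u', hu'⟩ := ih (fun k => fam k - (v k - g k ≫ v (k+1)))
        (by
          intro k hk
          rcases Nat.lt_or_ge k (m+1) with h | h
          · have hkm : k = m := by omega
            subst hkm
            rw [vm, vne (k+1) (by omega)]
            simp
          · rw [hfam k (by omega), vne k (by omega), vne (k+1) (by omega)]
            simp)
      refine ⟨fun k => u' k + v k, fun k => ?_⟩
      have := hu' k
      rw [Preadditive.comp_add]
      abel_nf
      abel_nf at this
      linear_combination (norm := abel_nf) this

lemma groupAux {G : Type*} [AddCommGroup G] (a b c d p q : G)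
    (h1 : a - c = p - q) (h2 : b - d = q) : (a + b) - (c + d) = p := by
  rw [add_sub_add_comm, h1, h2]
  abel

end Aux

/-- Let `C` be a triangulated category with a non-degenerate t-structure
`t`, whose associated cohomology is encoded by a homological functor `F : C ⥤ A` to an
abelian category (playing the role of the heart), with `Hⁱ(X) := F.obj (X⟦i⟧)`; the
hypotheses `hLE`/`hGE` express that the aisles are exactly detected by the vanishing of
this cohomology, which holds precisely for the cohomology of a non-degenerate t-structure.
Let `(jₖ : Xₖ ⟶ Xₖ₊₁)ₖ` be a sequence (where `Xₖ` plays the role of `X₋ₖ`) such that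
`∐ X` exists, and let `Y` be a homotopy colimit, i.e. a cone of `1 - μ`, with canonical
maps `Sigma.ι X n ≫ π : Xₙ ⟶ Y`. If for every `n ≥ 0` the map `Hⁱ(jₙ)` is an isomorphism
for all `i > -n` and an epimorphism for `i = -n`, then for every `n ≥ 0` the map
`Hⁱ(Sigma.ι X n ≫ π)` is an isomorphism for all `i > -n` and an epimorphism for `i = -n`. -/
theorem statement2 {C : Type u} [Category.{v} C] [Preadditive C] [HasZeroObject C]
    [HasShift C ℤ] [∀ n : ℤ, (shiftFunctor C n).Additive] [Pretriangulated C]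
    {A : Type u'} [Category.{v'} A] [Abelian A]
    (t : TStructure C) (F : C ⥤ A) [F.IsHomological]
    (hLE : ∀ (n : ℤ) (X : C), t.le n X ↔ ∀ i : ℤ, n < i → IsZero (F.obj (X⟦i⟧)))
    (hGE : ∀ (n : ℤ) (X : C), t.ge n X ↔ ∀ i : ℤ, i < n → IsZero (F.obj (X⟦i⟧)))
    (X : ℕ → C) (j : ∀ k : ℕ, X k ⟶ X (k + 1)) [HasCoproduct X]
    (Y : C) (π : (∐ X) ⟶ Y) (δ : Y ⟶ (∐ X)⟦(1 : ℤ)⟧)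
    (hT : Triangle.mk (𝟙 (∐ X) - Sigma.desc fun k => j k ≫ Sigma.ι X (k + 1)) π δ ∈
      distTriang C)
    (hiso : ∀ (n : ℕ) (i : ℤ), -(n : ℤ) < i → IsIso (F.map ((j n)⟦i⟧')))
    (hepi : ∀ n : ℕ, Epi (F.map ((j n)⟦-(n : ℤ)⟧'))) :
    ∀ n : ℕ, (∀ i : ℤ, -(n : ℤ) < i → IsIso (F.map ((Sigma.ι X n ≫ π)⟦i⟧'))) ∧
      Epi (F.map ((Sigma.ι X n ≫ π)⟦-(n : ℤ)⟧')) := by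
  letI : F.ShiftSequence ℤ := Functor.ShiftSequence.tautological F ℤ
  -- orthogonality
  have orth : ∀ (a b : ℤ), a < b → ∀ {W Z : C}, t.le a W → t.ge b Z →
      ∀ f : W ⟶ Z, f = 0 := by
    intro a b hab W Z hW hZ f
    have h1 : t.le 0 (W⟦a⟧) := t.le_shift a a 0 (by ring) W hW
    have h2 : t.ge (b - a) (Z⟦a⟧) := t.ge_shift b a (b - a) (by ring) Z hZ
    have h3 : t.ge 1 (Z⟦a⟧) := t.ge_antitone (show (1:ℤ) ≤ b - a by omega) _ h2
    have h4 : f⟦a⟧' = 0 := t.zero' (f⟦a⟧') h1 h3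
    apply (shiftFunctor C a).map_injective
    rw [h4, Functor.map_zero]
  -- cones over the maps `j k`
  choose Ck uk vk hTk using fun k => distinguished_cocone_triangle (j k)
  have coneLE : ∀ k : ℕ, t.le (-(k:ℤ)-1) (Ck k) := by
    intro k
    rw [hLE]
    intro i hi
    have hi' : -(k:ℤ) ≤ i := by omega
    have hepi' : Epi ((F.shift i).map (Triangle.mk (j k) (uk k) (vk k)).mor₁) := by
      rcases eq_or_lt_of_le hi' with h | h
      · subst h; exact hepi k
      · haveI : IsIso ((F.shift i).map (Triangle.mk (j k) (uk k) (vk k)).mor₁) := hiso k i h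
        exact inferInstance
    haveI hmono : Mono ((F.shift (i+1)).map (Triangle.mk (j k) (uk k) (vk k)).mor₁) := by
      haveI : IsIso ((F.shift (i+1)).map (Triangle.mk (j k) (uk k) (vk k)).mor₁) :=
        hiso k (i+1) (by omega)
      exact inferInstance
    have hf := (F.homologySequence_epi_shift_map_mor₁_iff _ (hTk k) i).1 hepi'
    have hg := (F.homologySequence_mono_shift_map_mor₁_iff _ (hTk k) i (i+1) rfl).1 hmono
    exact (F.homologySequence_exact₃ _ (hTk k) i (i+1) rfl).isZero_X₂ hf hg
  -- extension and injectivity along the maps `j k` for maps into `GE b` objects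
  have ext : ∀ (k : ℕ) (b : ℤ), -(k:ℤ) < b → ∀ (Z : C), t.ge b Z →
      ∀ φ : X k ⟶ Z, ∃ ψ : X (k+1) ⟶ Z, j k ≫ ψ = φ := by
    intro k b hb Z hZ φ
    have hC : t.le (-(k:ℤ)) ((Ck k)⟦(-1:ℤ)⟧) :=
      t.le_shift (-(k:ℤ)-1) (-1) (-(k:ℤ)) (by ring) _ (coneLE k)
    obtain ⟨ψ, hψ⟩ := Triangle.yoneda_exact₂ _ (inv_rot_of_distTriang _ (hTk k)) φ
      (orth (-(k:ℤ)) b hb hC hZ _)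
    exact ⟨ψ, hψ.symm⟩
  have inj : ∀ (k : ℕ) (b : ℤ), -(k:ℤ)-1 < b → ∀ (Z : C), t.ge b Z →
      ∀ ψ : X (k+1) ⟶ Z, j k ≫ ψ = 0 → ψ = 0 := by
    intro k b hb Z hZ ψ hjψ
    obtain ⟨(g : Ck k ⟶ Z), hgg⟩ := Triangle.yoneda_exact₂ _ (hTk k) ψ hjψ
    rw [hgg, orth (-(k:ℤ)-1) b hb (coneLE k) hZ g]
    exact comp_zero
  -- the shifted coproduct
  haveI : PreservesColimitsOfSize.{0,0} (shiftFunctor C (1:ℤ)) :=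
    (shiftEquiv C (1:ℤ)).toAdjunction.leftAdjoint_preservesColimits
  have hc : IsColimit ((shiftFunctor C (1:ℤ)).mapCocone (colimit.cocone (Discrete.functor X))) :=
    isColimitOfPreserves _ (colimit.isColimit _)
  have hext1 : ∀ {Z : C} (φ ψ : (∐ X)⟦(1:ℤ)⟧ ⟶ Z),
      (∀ k, (Sigma.ι X k)⟦(1:ℤ)⟧' ≫ φ = (Sigma.ι X k)⟦(1:ℤ)⟧' ≫ ψ) → φ = ψ := by
    intro Z φ ψ hcomp
    exact hc.hom_ext (by rintro ⟨k⟩; exact hcomp k)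
  have hdesc1 : ∀ {Z : C} (fam : ∀ k : ℕ, (X k)⟦(1:ℤ)⟧ ⟶ Z),
      ∃ φ : (∐ X)⟦(1:ℤ)⟧ ⟶ Z, ∀ k, (Sigma.ι X k)⟦(1:ℤ)⟧' ≫ φ = fam k := fun fam =>
    ⟨hc.desc ⟨_, Discrete.natTrans (fun k => fam k.as)⟩, fun k => hc.fac _ ⟨k⟩⟩
  -- naturality of the shift adjunction
  have nat : ∀ {A B W : C} (f0 : A ⟶ B) (g0 : B⟦(1:ℤ)⟧ ⟶ W),
      (shiftEquiv C (1:ℤ)).toAdjunction.homEquiv A W (f0⟦(1:ℤ)⟧' ≫ g0)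
      = f0 ≫ (shiftEquiv C (1:ℤ)).toAdjunction.homEquiv B W g0 :=
    fun f0 g0 => Adjunction.homEquiv_naturality_left _ f0 g0
  set α : (∐ X) ⟶ (∐ X) := 𝟙 (∐ X) - Sigma.desc fun k => j k ≫ Sigma.ι X (k + 1) with hα
  have hια : ∀ k, Sigma.ι X k ≫ α = Sigma.ι X k - j k ≫ Sigma.ι X (k+1) := by
    intro k
    rw [hα]
    simp [Preadditive.comp_sub]
  have hαπ : α ≫ π = 0 := comp_distTriang_mor_zero₁₂ _ hT
  have hδα : δ ≫ α⟦(1:ℤ)⟧' = 0 := comp_distTriang_mor_zero₃₁ _ hT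
  intro n
  -- Claim B : surjectivity of `Hom(Y, Z') → Hom(X n, Z')` for `Z'` in `GE (1-n)`
  have claimB : ∀ (Z' : C), t.ge (-(n:ℤ)+1) Z' → ∀ φ₀ : X n ⟶ Z',
      ∃ f : Y ⟶ Z', (Sigma.ι X n ≫ π) ≫ f = φ₀ := by
    intro Z' hZ' φ₀
    have extk : ∀ (m : ℕ) (φ : X (n+m) ⟶ Z'), ∃ ψ, j (n+m) ≫ ψ = φ := fun m =>
      ext (n+m) (-(n:ℤ)+1) (by push_cast; omega) Z' hZ'
    let up : ∀ m : ℕ, X (n+m) ⟶ Z' := fun m =>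
      Nat.rec φ₀ (fun m prev => (extk m prev).choose) m
    have upspec : ∀ m, j (n+m) ≫ up (m+1) = up m := fun m => (extk m (up m)).choose_spec
    set g : (∐ X) ⟶ Z' := Sigma.desc (fun k =>
      chainCmp X j n k ≫ eqToHom (congrArg X (Nat.add_comm k n)) ≫ up k) with hgdef
    have hgcomp : ∀ k, Sigma.ι X k ≫ g
        = chainCmp X j n k ≫ eqToHom (congrArg X (Nat.add_comm k n)) ≫ up k := by
      intro k
      rw [hgdef]
      simp
    have hαg : α ≫ g = 0 := by
      apply colimit.hom_ext
      rintro ⟨k⟩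
      have : (Sigma.ι X k ≫ α) ≫ g = 0 := by
        rw [hια k, Preadditive.sub_comp, assoc, hgcomp k, hgcomp (k+1),
          chainCompat X j n up upspec k]
        simp
      simpa [assoc] using this
    obtain ⟨(f : Y ⟶ Z'), hf⟩ := Triangle.yoneda_exact₂ _ hT g hαg
    have hf2 : g = π ≫ f := hf
    refine ⟨f, ?_⟩
    have hιg : Sigma.ι X n ≫ g = φ₀ := by
      rw [hgcomp n]
      exact chainAtN X j n up upspec
    rw [assoc, ← hf2]
    exact hιg
  -- Claim B' : shifted version
  have claimB1 : ∀ (Z : C), t.ge (-(n:ℤ)) Z → ∀ ψ : (X n)⟦(1:ℤ)⟧ ⟶ Z,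
      ∃ ft : Y⟦(1:ℤ)⟧ ⟶ Z, (Sigma.ι X n ≫ π)⟦(1:ℤ)⟧' ≫ ft = ψ := by
    intro Z hZ ψ
    have hZ1 : t.ge (-(n:ℤ)+1) (Z⟦(-1:ℤ)⟧) :=
      t.ge_shift (-(n:ℤ)) (-1) (-(n:ℤ)+1) (by ring) Z hZ
    obtain ⟨f, hf⟩ := claimB (Z⟦(-1:ℤ)⟧) hZ1
      ((shiftEquiv C (1:ℤ)).toAdjunction.homEquiv _ _ ψ)
    refine ⟨((shiftEquiv C (1:ℤ)).toAdjunction.homEquiv _ _).symm f, ?_⟩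
    apply ((shiftEquiv C (1:ℤ)).toAdjunction.homEquiv _ _).injective
    exact (nat _ _).trans ((congrArg (fun x => (Sigma.ι X n ≫ π) ≫ x) (Equiv.apply_symm_apply _ f)).trans hf)
  -- shifted extension for the Mittag-Leffler argument
  have ext1 : ∀ (k : ℕ), n ≤ k → ∀ (Z : C), t.ge (-(n:ℤ)) Z →
      ∀ ψ : (X k)⟦(1:ℤ)⟧ ⟶ Z, ∃ χ : (X (k+1))⟦(1:ℤ)⟧ ⟶ Z, (j k)⟦(1:ℤ)⟧' ≫ χ = ψ := by
    intro k hk Z hZ ψ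
    have hZ1 : t.ge (-(n:ℤ)+1) (Z⟦(-1:ℤ)⟧) :=
      t.ge_shift (-(n:ℤ)) (-1) (-(n:ℤ)+1) (by ring) Z hZ
    obtain ⟨χ', hχ'⟩ := ext k (-(n:ℤ)+1) (by push_cast; omega) _ hZ1
      ((shiftEquiv C (1:ℤ)).toAdjunction.homEquiv _ _ ψ)
    refine ⟨((shiftEquiv C (1:ℤ)).toAdjunction.homEquiv _ _).symm χ', ?_⟩
    apply ((shiftEquiv C (1:ℤ)).toAdjunction.homEquiv _ _).injective
    exact (nat _ _).trans ((congrArg (fun x => j k ≫ x) (Equiv.apply_symm_apply _ χ')).trans hχ')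
  -- Claim A : injectivity of `Hom(Y, Z) → Hom(X n, Z)` for `Z` in `GE (-n)`
  have claimA : ∀ (Z : C), t.ge (-(n:ℤ)) Z → ∀ f : Y ⟶ Z,
      (Sigma.ι X n ≫ π) ≫ f = 0 → f = 0 := by
    intro Z hZ f hqf
    let gs : ∀ k : ℕ, X k ⟶ Z := fun k => Sigma.ι X k ≫ π ≫ f
    have hgn : gs n = 0 := by
      show Sigma.ι X n ≫ π ≫ f = 0
      rw [← assoc]; exact hqf
    have compat : ∀ k, gs k = j k ≫ gs (k+1) := by
      intro k
      have h0 : (Sigma.ι X k ≫ α) ≫ (π ≫ f) = 0 := by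
        rw [assoc, ← assoc α π f, hαπ, zero_comp, comp_zero]
      rw [hια k, Preadditive.sub_comp] at h0
      have h1 := sub_eq_zero.mp h0
      show Sigma.ι X k ≫ π ≫ f = j k ≫ Sigma.ι X (k+1) ≫ π ≫ f
      rw [h1, assoc]
    have gup : ∀ m, gs (n+m) = 0 := by
      intro m
      induction m with
      | zero => exact hgn
      | succ m ih =>
          exact inj (n+m) (-(n:ℤ)) (by push_cast; omega) Z hZ _
            (by show j (n+m) ≫ gs (n+m+1) = 0; rw [← compat (n+m)]; exact ih)
    have gdown : ∀ i : ℕ, gs (n - i) = 0 := by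
      intro i
      induction i with
      | zero => exact hgn
      | succ i ih =>
          by_cases hin : n ≤ i
          · have e : n - (i+1) = n - i := by omega
            rw [e]; exact ih
          · have e : n - (i+1) + 1 = n - i := by omega
            have hz2 : gs (n - (i+1) + 1) = 0 := by rw [e]; exact ih
            rw [compat (n - (i+1)), hz2, comp_zero]
    have allz : ∀ k, gs k = 0 := by
      intro k
      rcases le_or_gt n k with h | h
      · rcases Nat.exists_eq_add_of_le h with ⟨m, rfl⟩
        exact gup m
      · have e : n - (n - k) = k := by omega
        rw [← e]; exact gdown (n - k)
    have hπf : π ≫ f = 0 := by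
      apply colimit.hom_ext
      rintro ⟨k⟩
      rw [comp_zero]
      exact allz k
    obtain ⟨h, hh⟩ := Triangle.yoneda_exact₃ _ hT f hπf
    have hh2 : f = δ ≫ h := hh
    -- Mittag-Leffler: solve `u k - j k⟦1⟧' ≫ u (k+1) = ι k⟦1⟧' ≫ h`
    obtain ⟨u'', hu''⟩ := mlDown (fun k => (X k)⟦(1:ℤ)⟧) (fun k => (j k)⟦(1:ℤ)⟧') n
      (fun k => if n ≤ k then 0 else (Sigma.ι X k)⟦(1:ℤ)⟧' ≫ h) (fun k hk => if_pos hk)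
    let U : ∀ k : ℕ, (X k)⟦(1:ℤ)⟧ ⟶ Z := fun k => Nat.rec 0
      (fun k prev => if hk : n ≤ k then
        (ext1 k hk Z hZ (prev - (Sigma.ι X k)⟦(1:ℤ)⟧' ≫ h)).choose else 0) k
    have hUsucc : ∀ k (hk : n ≤ k),
        (j k)⟦(1:ℤ)⟧' ≫ U (k+1) = U k - (Sigma.ι X k)⟦(1:ℤ)⟧' ≫ h := by
      intro k hk
      show (j k)⟦(1:ℤ)⟧' ≫ (if hk' : n ≤ k then
        (ext1 k hk' Z hZ (U k - (Sigma.ι X k)⟦(1:ℤ)⟧' ≫ h)).choose else 0) = _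
      rw [dif_pos hk]
      exact (ext1 k hk Z hZ _).choose_spec
    have hUle : ∀ k, k ≤ n → U k = 0 := by
      intro k hk
      cases k with
      | zero => rfl
      | succ k =>
          show (if hk' : n ≤ k then _ else 0) = 0
          rw [dif_neg (by omega)]
    have hUeq : ∀ k, U k - (j k)⟦(1:ℤ)⟧' ≫ U (k+1)
        = (Sigma.ι X k)⟦(1:ℤ)⟧' ≫ h
          - (if n ≤ k then 0 else (Sigma.ι X k)⟦(1:ℤ)⟧' ≫ h) := by
      intro k
      by_cases hk : n ≤ k
      · rw [if_pos hk, hUsucc k hk]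
        simp
      · rw [if_neg hk, hUle k (by omega), hUle (k+1) (by omega)]
        simp
    obtain ⟨h', hh'⟩ := hdesc1 (fun k => U k + u'' k)
    have hαh : α⟦(1:ℤ)⟧' ≫ h' = h := by
      apply hext1
      intro k
      have c1 : (Sigma.ι X k)⟦(1:ℤ)⟧' ≫ α⟦(1:ℤ)⟧'
          = (Sigma.ι X k)⟦(1:ℤ)⟧' - (j k)⟦(1:ℤ)⟧' ≫ (Sigma.ι X (k+1))⟦(1:ℤ)⟧' := by
        rw [← Functor.map_comp, hια k, Functor.map_sub, Functor.map_comp]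
      rw [← assoc, c1, Preadditive.sub_comp, assoc, hh' k, hh' (k+1),
        Preadditive.comp_add]
      exact groupAux _ _ _ _ _ _ (hUeq k) (hu'' k)
    rw [hh2, ← hαh, ← assoc, hδα, zero_comp]
  -- the cone of `Sigma.ι X n ≫ π`
  obtain ⟨K, r, s, hTK⟩ := distinguished_cocone_triangle (Sigma.ι X n ≫ π)
  have hHom : ∀ (Z : C), t.ge (-(n:ℤ)) Z → ∀ φ : K ⟶ Z, φ = 0 := by
    intro Z hZ φ
    have hqr : (Sigma.ι X n ≫ π) ≫ r = 0 := comp_distTriang_mor_zero₁₂ _ hTK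
    have hrφ : r ≫ φ = 0 := claimA Z hZ (r ≫ φ) (by rw [← assoc, hqr, zero_comp])
    obtain ⟨ψ, hψ⟩ := Triangle.yoneda_exact₃ _ hTK φ hrφ
    have hψ2 : φ = s ≫ ψ := hψ
    obtain ⟨ft, hft⟩ := claimB1 Z hZ ψ
    have hsq : s ≫ (Sigma.ι X n ≫ π)⟦(1:ℤ)⟧' = 0 := comp_distTriang_mor_zero₃₁ _ hTK
    rw [hψ2, ← hft, ← assoc, hsq, zero_comp]
  have HK : ∀ i : ℤ, -(n:ℤ) ≤ i → IsZero (F.obj (K⟦i⟧)) := by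
    obtain ⟨A', B', hA', hB', a, b, c, hTr⟩ :=
      t.exists_triangle K (-(n:ℤ)-1) (-(n:ℤ)) (by ring)
    have hb : b = 0 := hHom B' hB' b
    obtain ⟨(s' : K ⟶ A'), hs'⟩ := Triangle.coyoneda_exact₂ _ hTr (𝟙 K) (by
      show 𝟙 K ≫ b = 0
      rw [hb, comp_zero])
    have hs2 : 𝟙 K = s' ≫ a := hs'
    intro i hi
    have hz : IsZero (F.obj (A'⟦i⟧)) := (hLE _ _).1 hA' i (by omega)
    rw [IsZero.iff_id_eq_zero]
    have hid : 𝟙 (F.obj (K⟦i⟧)) = F.map (s'⟦i⟧') ≫ F.map (a⟦i⟧') := by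
      rw [← F.map_comp, ← Functor.map_comp, ← hs2]
      simp
    rw [hid, hz.eq_of_tgt (F.map (s'⟦i⟧')) 0, zero_comp]
  constructor
  · intro i hi
    have h1 : F.homologySequenceδ (Triangle.mk (Sigma.ι X n ≫ π) r s) (i-1) i (by ring) = 0 :=
      (HK (i-1) (by omega)).eq_of_src _ _
    haveI hm : Mono ((F.shift i).map (Triangle.mk (Sigma.ι X n ≫ π) r s).mor₁) :=
      (F.homologySequence_mono_shift_map_mor₁_iff _ hTK (i-1) i (by ring)).2 h1
    have h2 : (F.shift i).map (Triangle.mk (Sigma.ι X n ≫ π) r s).mor₂ = 0 :=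
      (HK i (by omega)).eq_of_tgt _ _
    haveI he : Epi ((F.shift i).map (Triangle.mk (Sigma.ι X n ≫ π) r s).mor₁) :=
      (F.homologySequence_epi_shift_map_mor₁_iff _ hTK i).2 h2
    have : IsIso ((F.shift i).map (Triangle.mk (Sigma.ι X n ≫ π) r s).mor₁) :=
      isIso_of_mono_of_epi _
    exact this
  · have h2 : (F.shift (-(n:ℤ))).map (Triangle.mk (Sigma.ι X n ≫ π) r s).mor₂ = 0 :=
      (HK (-(n:ℤ)) (by omega)).eq_of_tgt _ _
    have : Epi ((F.shift (-(n:ℤ))).map (Triangle.mk (Sigma.ι X n ≫ π) r s).mor₁) :=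
      (F.homologySequence_epi_shift_map_mor₁_iff _ hTK (-(n:ℤ))).2 h2
    exact this
end

section
/- Let T be a triangulated category with a non-degenerate t-structure. Let (j_{−k,−k−1} : X_{−k} → X_{−k−1})_{k≥0} be a sequence such that ⊕_k X_{−k} exists in T, and assume that for all n ≥ 0 the morphism H^i(j_{−n,−n−1}) is an isomorphism for i > −n and an epimorphism for i = −n. Let Y ∈ T and let f_{−n} : X_{−n} → Y be morphisms with f_{−n−1} ∘ j_{−n,−n−1} = f_{−n} for all n ≥ 0, and assume that for every i ∈ ℤ there is M(i) such that H^i(f_{−n}) : H^i(X_{−n}) → H^i(Y) is an isomorphism for all n > M(i). Then any morphism f : hocolim_n X_{−n} → Y satisfying f ∘ j_{−n} = f_{−n} for all n induces isomorphisms H^i(f) : H^i(hocolim_n X_{−n}) → H^i(Y) for all i ∈ ℤ; in particular f is an isomorphism in T. -/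
open CategoryTheory Category Limits Pretriangulated Triangulated

universe v u v' u'

namespace Statement3Aux

variable {C : Type u} [Category.{v} C] [Preadditive C]

/-- Composite `X a ⟶ X b` of the maps `j`; junk value `0` if `a > b`. -/
def Jmap (X : ℕ → C) (j : ∀ k : ℕ, X k ⟶ X (k + 1)) : ∀ a b : ℕ, (X a ⟶ X b)
  | a, 0 => if h : a = 0 then eqToHom (congrArg X h) else 0
  | a, b+1 => if h : a = b + 1 then eqToHom (congrArg X h) else Jmap X j a b ≫ j b

variable (X : ℕ → C) (j : ∀ k : ℕ, X k ⟶ X (k + 1))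

lemma Jmap_self (a : ℕ) : Jmap X j a a = 𝟙 (X a) := by
  cases a with
  | zero => simp [Jmap]
  | succ b => simp [Jmap]

lemma Jmap_succ {a b : ℕ} (h : a ≤ b) : Jmap X j a (b + 1) = Jmap X j a b ≫ j b := by
  rw [Jmap, dif_neg (by omega)]

lemma Jmap_peel {a b : ℕ} (h : a < b) : Jmap X j a b = j a ≫ Jmap X j (a + 1) b := by
  induction b with
  | zero => omega
  | succ b ih =>
    rcases Nat.lt_or_ge a b with h' | h'
    · rw [Jmap_succ X j (by omega), ih h', assoc, ← Jmap_succ X j (by omega)]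
    · have : a = b := by omega
      subst this
      rw [Jmap_succ X j le_rfl, Jmap_self, id_comp, Jmap_self, comp_id]

/-- Solving the telescope equation `η k - j k ≫ η (k+1) = θ k`, given that
composition with `j m` is bijective on maps to `W'` for `m ≥ n`. -/
lemma telescope {W' : C} (n : ℕ)
    (hbij : ∀ m : ℕ, n ≤ m → Function.Bijective (fun φ : X (m + 1) ⟶ W' => j m ≫ φ))
    (θ : ∀ k : ℕ, X k ⟶ W') :
    ∃ η : ∀ k : ℕ, X k ⟶ W', ∀ k, η k - j k ≫ η (k + 1) = θ k := by
  let e : ∀ m : ℕ, n ≤ m → ((X (m + 1) ⟶ W') ≃ (X m ⟶ W')) :=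
    fun m hm => Equiv.ofBijective _ (hbij m hm)
  let η : ∀ k : ℕ, X k ⟶ W' := fun k => Nat.rec
    (∑ m ∈ Finset.Ico 0 n, Jmap X j 0 m ≫ θ m)
    (fun k ih => if h : k + 1 ≤ n then ∑ m ∈ Finset.Ico (k + 1) n, Jmap X j (k + 1) m ≫ θ m
      else (e k (by omega)).symm (ih - θ k)) k
  have hle : ∀ k : ℕ, k ≤ n → η k = ∑ m ∈ Finset.Ico k n, Jmap X j k m ≫ θ m := by
    intro k hk
    cases k with
    | zero => rfl
    | succ k => exact dif_pos hk
  refine ⟨η, fun k => ?_⟩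
  by_cases h : k + 1 ≤ n
  · have h1 : η k = ∑ m ∈ Finset.Ico k n, Jmap X j k m ≫ θ m := hle k (by omega)
    have h2 : η (k + 1) = ∑ m ∈ Finset.Ico (k + 1) n, Jmap X j (k + 1) m ≫ θ m := hle _ h
    rw [h1, h2, Preadditive.comp_sum,
      Finset.sum_eq_sum_Ico_succ_bot (by omega : k < n) (fun m => Jmap X j k m ≫ θ m),
      Jmap_self, id_comp]
    have : ∀ m ∈ Finset.Ico (k + 1) n, j k ≫ Jmap X j (k + 1) m ≫ θ m = Jmap X j k m ≫ θ m := by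
      intro m hm
      simp only [Finset.mem_Ico] at hm
      rw [← assoc, ← Jmap_peel X j (by omega)]
    rw [Finset.sum_congr rfl this]
    abel
  · have h2 : η (k + 1) = (e k (by omega)).symm (η k - θ k) := dif_neg h
    rw [h2]
    have := (e k (by omega : n ≤ k)).apply_symm_apply (η k - θ k)
    -- `e k _ φ = j k ≫ φ` by rfl
    have h3 : j k ≫ (e k (by omega : n ≤ k)).symm (η k - θ k) = η k - θ k := this
    rw [h3]
    abel

/-- Building a compatible family through bijectivity, with prescribed value at `n`. -/
lemma chain {W' : C} (n : ℕ)
    (hbij : ∀ m : ℕ, n ≤ m → Function.Bijective (fun φ : X (m + 1) ⟶ W' => j m ≫ φ))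
    (α : X n ⟶ W') :
    ∃ φ : ∀ k : ℕ, X k ⟶ W', φ n = α ∧ ∀ k, φ k = j k ≫ φ (k + 1) := by
  let e : ∀ m : ℕ, n ≤ m → ((X (m + 1) ⟶ W') ≃ (X m ⟶ W')) :=
    fun m hm => Equiv.ofBijective _ (hbij m hm)
  let φ : ∀ k : ℕ, X k ⟶ W' := fun k => Nat.rec
    (Jmap X j 0 n ≫ α)
    (fun k ih => if h : k + 1 ≤ n then Jmap X j (k + 1) n ≫ α
      else (e k (by omega)).symm ih) k
  have hle : ∀ k : ℕ, k ≤ n → φ k = Jmap X j k n ≫ α := by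
    intro k hk
    cases k with
    | zero => rfl
    | succ k => exact dif_pos hk
  refine ⟨φ, by rw [hle n le_rfl, Jmap_self, id_comp], fun k => ?_⟩
  by_cases h : k + 1 ≤ n
  · rw [hle k (by omega), hle (k + 1) h, ← assoc, ← Jmap_peel X j (by omega)]
  · have h2 : φ (k + 1) = (e k (by omega)).symm (φ k) := dif_neg h
    rw [h2]
    exact ((e k (by omega : n ≤ k)).apply_symm_apply (φ k)).symm

/-- A compatible family vanishing at `n` vanishes everywhere, given bijectivity above `n`. -/
lemma vanish {W' : C} (n : ℕ)
    (hbij : ∀ m : ℕ, n ≤ m → Function.Bijective (fun φ : X (m + 1) ⟶ W' => j m ≫ φ))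
    (φ : ∀ k : ℕ, X k ⟶ W') (hrel : ∀ k, φ k = j k ≫ φ (k + 1)) (hn : φ n = 0) :
    ∀ k, φ k = 0 := by
  have hup : ∀ m : ℕ, φ (n + m) = 0 := by
    intro m
    induction m with
    | zero => exact hn
    | succ m ih =>
      apply (hbij (n + m) (by omega)).1
      have := (hrel (n + m)).symm
      rw [ih] at this
      show j (n + m) ≫ φ (n + m + 1) = j (n + m) ≫ 0
      simpa using this
  have hdown : ∀ d : ℕ, φ (n - d) = 0 := by
    intro d
    induction d with
    | zero => exact hup 0
    | succ d ih =>
      by_cases hd : d < n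
      · have h1 : n - d = (n - (d + 1)) + 1 := by omega
        rw [h1] at ih
        rw [hrel (n - (d + 1)), ih, comp_zero]
      · have h1 : n - (d + 1) = n - d := by omega
        rw [h1]
        exact ih
  intro k
  rcases le_or_gt k n with hk | hk
  · have := hdown (n - k)
    rwa [(by omega : n - (n - k) = k)] at this
  · have := hup (k - n)
    rwa [(by omega : n + (k - n) = k)] at this

section Triangulated

variable [HasZeroObject C] [HasShift C ℤ] [∀ n : ℤ, (shiftFunctor C n).Additive]
  [Pretriangulated C] [HasCoproduct X]

lemma iota_comp_sub (k : ℕ) :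
    Sigma.ι X k ≫ (𝟙 (∐ X) - Sigma.desc fun k => j k ≫ Sigma.ι X (k + 1)) =
      Sigma.ι X k - j k ≫ Sigma.ι X (k + 1) := by
  simp [Preadditive.comp_sub]

variable {Z : C} {π : (∐ X) ⟶ Z} {δ : Z ⟶ (∐ X)⟦(1 : ℤ)⟧}

/-- Surjectivity of `Hom(Z, W) → Hom(X n, W)`. -/
lemma surj_out
    (hT : Triangle.mk (𝟙 (∐ X) - Sigma.desc fun k => j k ≫ Sigma.ι X (k + 1)) π δ ∈
      distTriang C)
    {W : C} (n : ℕ)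
    (hbij : ∀ m : ℕ, n ≤ m → Function.Bijective (fun φ : X (m + 1) ⟶ W => j m ≫ φ))
    (α : X n ⟶ W) : ∃ ψ : Z ⟶ W, Sigma.ι X n ≫ π ≫ ψ = α := by
  obtain ⟨φ, hφn, hφrel⟩ := chain X j n hbij α
  have h0 : (𝟙 (∐ X) - Sigma.desc fun k => j k ≫ Sigma.ι X (k + 1)) ≫ Sigma.desc φ = 0 := by
    apply Limits.Sigma.hom_ext
    intro k
    rw [← assoc, iota_comp_sub, Preadditive.sub_comp, assoc]
    simp [← hφrel k]
  obtain ⟨ψ, hψ⟩ : ∃ ψ : Z ⟶ W, Sigma.desc φ = π ≫ ψ :=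
    Triangle.yoneda_exact₂ _ hT (Sigma.desc φ) h0
  refine ⟨ψ, ?_⟩
  have := congrArg (fun u => Sigma.ι X n ≫ u) hψ
  beta_reduce at this
  rw [Sigma.ι_desc] at this
  rw [← this, hφn]

/-- Injectivity statement: a map out of `Z` vanishing on `X n` vanishes. -/
lemma zero_out
    (hT : Triangle.mk (𝟙 (∐ X) - Sigma.desc fun k => j k ≫ Sigma.ι X (k + 1)) π δ ∈
      distTriang C)
    {W : C} (n : ℕ)
    (hbij : ∀ m : ℕ, n ≤ m → Function.Bijective (fun φ : X (m + 1) ⟶ W => j m ≫ φ))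
    (hbij' : ∀ m : ℕ, n ≤ m →
      Function.Bijective (fun φ : X (m + 1) ⟶ (W⟦(-1 : ℤ)⟧) => j m ≫ φ))
    (ψ : Z ⟶ W) (hψ : Sigma.ι X n ≫ π ≫ ψ = 0) : ψ = 0 := by
  have hπψ : π ≫ ψ = 0 := by
    have hvan := vanish X j n hbij (fun k => Sigma.ι X k ≫ π ≫ ψ) (fun k => ?_) hψ
    · apply Limits.Sigma.hom_ext
      intro k
      simpa using hvan k
    · have h1 : (𝟙 (∐ X) - Sigma.desc fun k => j k ≫ Sigma.ι X (k + 1)) ≫ π = 0 :=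
        comp_distTriang_mor_zero₁₂ _ hT
      have h2 := congrArg (fun u => Sigma.ι X k ≫ u ≫ ψ) h1
      beta_reduce at h2
      rw [← assoc, ← assoc, iota_comp_sub] at h2
      simp only [Preadditive.sub_comp, zero_comp, comp_zero, assoc] at h2
      rw [sub_eq_zero] at h2
      simpa using h2
  obtain ⟨θ, hθ⟩ : ∃ θ : (∐ X)⟦(1 : ℤ)⟧ ⟶ W, ψ = δ ≫ θ :=
    Triangle.yoneda_exact₃ _ hT ψ hπψ
  let adj := (shiftEquiv C (1 : ℤ)).toAdjunction
  let θ' : (∐ X) ⟶ (W⟦(-1 : ℤ)⟧) := adj.homEquiv _ _ θ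
  obtain ⟨η, hη⟩ := telescope X j n hbij' (fun k => Sigma.ι X k ≫ θ')
  have hθ'' : θ' = (𝟙 (∐ X) - Sigma.desc fun k => j k ≫ Sigma.ι X (k + 1)) ≫
      Sigma.desc η := by
    apply Limits.Sigma.hom_ext
    intro k
    rw [← assoc, iota_comp_sub, Preadditive.sub_comp, assoc]
    simpa using (hη k).symm
  have hθfact : θ = ((𝟙 (∐ X) - Limits.Sigma.desc fun k => j k ≫ Sigma.ι X (k + 1))⟦(1 : ℤ)⟧') ≫
      (adj.homEquiv _ _).symm (Sigma.desc η) := by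
    have h3 : θ = (adj.homEquiv _ _).symm θ' := ((adj.homEquiv _ _).symm_apply_apply θ).symm
    rw [h3, hθ'']
    exact adj.homEquiv_naturality_left_symm _ _
  rw [hθ, hθfact]
  have h4 : δ ≫ (𝟙 (∐ X) - Sigma.desc fun k => j k ≫ Sigma.ι X (k + 1))⟦(1 : ℤ)⟧' = 0 :=
    comp_distTriang_mor_zero₃₁ _ hT
  exact ((reassoc_of% h4) _).trans zero_comp

end Triangulated

section Abelian

/-- If in `P ⟶ Q ⟶ T ⟶ R ⟶ S` the first map is epi, the last is mono, consecutive
composites vanish and the sequence is exact at `T`, then `T` is zero. -/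
lemma isZero_mid {B : Type u'} [Category.{v'} B] [Abelian B] {P Q T R S : B}
    (u : P ⟶ Q) (v : Q ⟶ T) (w : T ⟶ R) (x : R ⟶ S)
    (huv : u ≫ v = 0) (hvw : v ≫ w = 0) (hwx : w ≫ x = 0)
    (hex : (ShortComplex.mk v w hvw).Exact) (hu : Epi u) (hx : Mono x) : IsZero T := by
  have hv : v = 0 := by rw [← cancel_epi u, huv, comp_zero]
  have hw : w = 0 := by rw [← cancel_mono x, hwx, zero_comp]
  exact hex.isZero_of_both_zeros hv hw

end Abelian

section TStr

variable [HasZeroObject C] [HasShift C ℤ] [∀ n : ℤ, (shiftFunctor C n).Additive]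
  [Pretriangulated C]

/-- Orthogonality for a t-structure. -/
lemma homzero (t : TStructure C) {a b : ℤ} {U W : C} (hU : t.le a U) (hW : t.ge b W)
    (hab : a < b) (f : U ⟶ W) : f = 0 := by
  have hW' : t.ge (a + 1) W := t.ge_antitone (by omega : a + 1 ≤ b) W hW
  have h1 : t.le 0 (U⟦a⟧) := t.le_shift a a 0 (by omega) U hU
  have h2 : t.ge 1 (W⟦a⟧) := t.ge_shift (a + 1) a 1 (by omega) W hW'
  have h3 : f⟦a⟧' = 0 := t.zero' (f⟦a⟧') h1 h2
  apply (shiftFunctor C a).map_injective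
  rw [h3, Functor.map_zero]

variable {A : Type u'} [Category.{v'} A] [Abelian A]

/-- Composition with `j m` is bijective on maps to `W ∈ GE b` when `-m < b`. -/
lemma jbij (t : TStructure C) (F : C ⥤ A) [F.IsHomological]
    (hLE : ∀ (n : ℤ) (Xc : C), t.le n Xc ↔ ∀ i : ℤ, n < i → IsZero (F.obj (Xc⟦i⟧)))
    (hiso : ∀ (n : ℕ) (i : ℤ), -(n : ℤ) < i → IsIso (F.map ((j n)⟦i⟧')))
    (hepi : ∀ n : ℕ, Epi (F.map ((j n)⟦-(n : ℤ)⟧')))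
    {W : C} {b : ℤ} (hW : t.ge b W) (m : ℕ) (hm : -(m : ℤ) < b) :
    Function.Bijective (fun φ : X (m + 1) ⟶ W => j m ≫ φ) := by
  obtain ⟨Cm, c, d, hTm⟩ := distinguished_cocone_triangle (j m)
  letI : F.ShiftSequence ℤ := Functor.ShiftSequence.tautological _ _
  have hCm : ∀ i : ℤ, -(m : ℤ) - 1 < i → IsZero (F.obj (Cm⟦i⟧)) := by
    intro i hi
    have hEpi : Epi ((F.shift i).map (j m)) := by
      rcases eq_or_lt_of_le (by omega : -(m : ℤ) ≤ i) with h | h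
      · subst h
        exact hepi m
      · have := hiso m i h
        have h' : IsIso ((F.shift i).map (j m)) := this
        infer_instance
    have hMono : Mono ((F.shift (i + 1)).map (j m)) := by
      have := hiso m (i + 1) (by omega)
      have h' : IsIso ((F.shift (i + 1)).map (j m)) := this
      infer_instance
    exact isZero_mid ((F.shift i).map (j m)) ((F.shift i).map c)
      (F.homologySequenceδ (Triangle.mk (j m) c d) i (i + 1) rfl)
      ((F.shift (i + 1)).map (j m))
      (F.homologySequence_comp _ hTm i)
      (F.comp_homologySequenceδ _ hTm i (i + 1) rfl)
      (F.homologySequenceδ_comp _ hTm i (i + 1) rfl)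
      (F.homologySequence_exact₃ _ hTm i (i + 1) rfl) hEpi hMono
  have hLECm : t.le (-(m : ℤ) - 1) Cm := (hLE _ _).2 hCm
  constructor
  · intro φ₁ φ₂ h12
    dsimp at h12
    have h0 : j m ≫ (φ₁ - φ₂) = 0 := by
      rw [Preadditive.comp_sub, h12, sub_self]
    obtain ⟨ρ, hρ⟩ := Triangle.yoneda_exact₂ _ hTm (φ₁ - φ₂) h0
    have hρ0 : ρ = 0 := homzero t hLECm hW (by omega) ρ
    rw [hρ0, comp_zero] at hρ
    exact sub_eq_zero.mp hρ
  · intro α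
    have hLE' : t.le (-(m : ℤ)) (Cm⟦(-1 : ℤ)⟧) :=
      t.le_shift (-(m : ℤ) - 1) (-1) (-(m : ℤ)) (by omega) Cm hLECm
    obtain ⟨φ, hφ⟩ := Triangle.yoneda_exact₂ _ (inv_rot_of_distTriang _ hTm) α
      (homzero t hLE' hW (by omega) _)
    exact ⟨φ, hφ.symm⟩

end TStr

end Statement3Aux

open Statement3Aux in
/-- Let `C` be a triangulated category with a non-degenerate t-structure
`t`, whose cohomology is encoded by a homological functor `F : C ⥤ A` to an abelian
category (playing the role of the heart), with `Hⁱ(X) := F.obj (X⟦i⟧)`; the hypotheses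
`hLE`/`hGE` express that the aisles are exactly detected by vanishing of this cohomology
(which holds precisely for the cohomology of a non-degenerate t-structure).
Let `(jₖ : Xₖ ⟶ Xₖ₊₁)ₖ` be a sequence (`Xₖ` playing the role of `X₋ₖ`) such that `∐ X`
exists, and assume `Hⁱ(jₙ)` is an isomorphism for `i > -n` and an epimorphism for `i = -n`.
Let `Y` be an object with maps `fₙ : Xₙ ⟶ Y` satisfying `fₙ₊₁ ∘ jₙ = fₙ`, and assume that
for every `i` there is `M i` such that `Hⁱ(fₙ)` is an isomorphism for all `n > M i`.
Then for any homotopy colimit `Z` (a cone of `1 - μ`, with canonical maps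
`Sigma.ι X n ≫ π`), any morphism `g : Z ⟶ Y` with `g ∘ (Sigma.ι X n ≫ π) = fₙ` for all
`n` induces isomorphisms `Hⁱ(g)` for all `i ∈ ℤ`; in particular `g` is an isomorphism. -/
theorem statement3 {C : Type u} [Category.{v} C] [Preadditive C] [HasZeroObject C]
    [HasShift C ℤ] [∀ n : ℤ, (shiftFunctor C n).Additive] [Pretriangulated C]
    {A : Type u'} [Category.{v'} A] [Abelian A]
    (t : TStructure C) (F : C ⥤ A) [F.IsHomological]
    (hLE : ∀ (n : ℤ) (X : C), t.le n X ↔ ∀ i : ℤ, n < i → IsZero (F.obj (X⟦i⟧)))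
    (hGE : ∀ (n : ℤ) (X : C), t.ge n X ↔ ∀ i : ℤ, i < n → IsZero (F.obj (X⟦i⟧)))
    (X : ℕ → C) (j : ∀ k : ℕ, X k ⟶ X (k + 1)) [HasCoproduct X]
    (hiso : ∀ (n : ℕ) (i : ℤ), -(n : ℤ) < i → IsIso (F.map ((j n)⟦i⟧')))
    (hepi : ∀ n : ℕ, Epi (F.map ((j n)⟦-(n : ℤ)⟧')))
    (Y : C) (f : ∀ n : ℕ, X n ⟶ Y) (hf : ∀ n : ℕ, j n ≫ f (n + 1) = f n)
    (M : ℤ → ℕ) (hM : ∀ (i : ℤ) (n : ℕ), M i < n → IsIso (F.map ((f n)⟦i⟧')))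
    (Z : C) (π : (∐ X) ⟶ Z) (δ : Z ⟶ (∐ X)⟦(1 : ℤ)⟧)
    (hT : Triangle.mk (𝟙 (∐ X) - Sigma.desc fun k => j k ≫ Sigma.ι X (k + 1)) π δ ∈
      distTriang C)
    (g : Z ⟶ Y) (hg : ∀ n : ℕ, (Sigma.ι X n ≫ π) ≫ g = f n) :
    (∀ i : ℤ, IsIso (F.map (g⟦i⟧'))) ∧ IsIso g := by
  letI : F.ShiftSequence ℤ := Functor.ShiftSequence.tautological _ _
  have hbijW : ∀ (W : C) (b : ℤ), t.ge b W → ∀ m : ℕ, -(m : ℤ) < b →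
      Function.Bijective (fun φ : X (m + 1) ⟶ W => j m ≫ φ) :=
    fun W b hW m hm => jbij X j t F hLE hiso hepi hW m hm
  -- Step 1: the cone of `X n ⟶ Z` has vanishing cohomology in degrees `≥ -n + 1`.
  have key : ∀ n : ℕ, ∃ (CZ : C) (c : Z ⟶ CZ) (d : CZ ⟶ (X n)⟦(1 : ℤ)⟧),
      (Triangle.mk (Sigma.ι X n ≫ π) c d ∈ distTriang C) ∧
      ∀ i : ℤ, -(n : ℤ) + 1 ≤ i → IsZero (F.obj (CZ⟦i⟧)) := by
    intro n
    obtain ⟨CZ, c, d, hTZ⟩ := distinguished_cocone_triangle (Sigma.ι X n ≫ π)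
    have horth : ∀ (W : C), t.ge (-(n : ℤ) + 1) W → ∀ u : CZ ⟶ W, u = 0 := by
      intro W hW u
      have hWm : t.ge (-(n : ℤ) + 2) (W⟦(-1 : ℤ)⟧) :=
        t.ge_shift (-(n : ℤ) + 1) (-1) (-(n : ℤ) + 2) (by omega) W hW
      have hb : ∀ m : ℕ, n ≤ m → Function.Bijective (fun φ : X (m + 1) ⟶ W => j m ≫ φ) :=
        fun m hm => hbijW W _ hW m (by omega)
      have hb' : ∀ m : ℕ, n ≤ m →
          Function.Bijective (fun φ : X (m + 1) ⟶ (W⟦(-1 : ℤ)⟧) => j m ≫ φ) :=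
        fun m hm => hbijW _ _ hWm m (by omega)
      have hcu : c ≫ u = 0 := by
        apply zero_out X j hT n hb hb'
        have h12 : (Sigma.ι X n ≫ π) ≫ c = 0 := comp_distTriang_mor_zero₁₂ _ hTZ
        rw [← assoc, ← assoc, h12, zero_comp]
      obtain ⟨χ, hχ⟩ : ∃ χ : (X n)⟦(1 : ℤ)⟧ ⟶ W, u = d ≫ χ :=
        Triangle.yoneda_exact₃ _ hTZ u hcu
      let adj := (shiftEquiv C (1 : ℤ)).toAdjunction
      obtain ⟨ψ', hψ'⟩ := surj_out X j hT n hb' (adj.homEquiv _ _ χ)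
      have hχ2 : χ = (Sigma.ι X n ≫ π)⟦(1 : ℤ)⟧' ≫ (adj.homEquiv Z W).symm ψ' := by
        have h3 : χ = (adj.homEquiv (X n) W).symm (adj.homEquiv (X n) W χ) :=
          ((adj.homEquiv (X n) W).symm_apply_apply χ).symm
        rw [h3, ← hψ', ← assoc]
        exact adj.homEquiv_naturality_left_symm _ _
      rw [hχ, hχ2]
      have h4 : d ≫ (Sigma.ι X n ≫ π)⟦(1 : ℤ)⟧' = 0 := comp_distTriang_mor_zero₃₁ _ hTZ
      exact ((reassoc_of% h4) _).trans zero_comp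
    refine ⟨CZ, c, d, hTZ, fun i hi => ?_⟩
    obtain ⟨Aobj, Bobj, hA, hB, a, v, w, hTri⟩ :=
      t.exists_triangle CZ (-(n : ℤ)) (-(n : ℤ) + 1) rfl
    have hv : v = 0 := horth Bobj hB v
    obtain ⟨r, hr⟩ : ∃ r : CZ ⟶ Aobj, 𝟙 CZ = r ≫ a := Triangle.coyoneda_exact₂ _ hTri (𝟙 CZ) (by
      dsimp only [Triangle.mk]
      rw [hv]
      exact comp_zero)
    have hr' : 𝟙 CZ = r ≫ a := hr
    have hAz : IsZero (F.obj (Aobj⟦i⟧)) := (hLE _ _).1 hA i (by omega)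
    rw [IsZero.iff_id_eq_zero]
    calc 𝟙 (F.obj (CZ⟦i⟧)) = F.map ((𝟙 CZ)⟦i⟧') := by simp
      _ = F.map (r⟦i⟧') ≫ F.map (a⟦i⟧') := by
          rw [hr', Functor.map_comp, Functor.map_comp]
      _ = 0 := by rw [hAz.eq_of_src (F.map (a⟦i⟧')) 0, comp_zero]
  -- Step 2: `F.map (g⟦i⟧')` is an isomorphism for all `i`.
  have hgiso : ∀ i : ℤ, IsIso (F.map (g⟦i⟧')) := by
    intro i
    obtain ⟨n, hn1, hn2⟩ : ∃ n : ℕ, M i < n ∧ -(n : ℤ) + 2 ≤ i := by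
      refine ⟨max (M i + 1) (2 - i).toNat, ?_, ?_⟩
      · have := le_max_left (M i + 1) (2 - i).toNat
        omega
      · have h1 := le_max_right (M i + 1) (2 - i).toNat
        have h2 := Int.self_le_toNat (2 - i)
        have h3 : ((2 - i).toNat : ℤ) ≤ ((max (M i + 1) (2 - i).toNat : ℕ) : ℤ) := by
          exact_mod_cast h1
        omega
    obtain ⟨CZ, c, d, hTZ, hvan⟩ := key n
    have hmono : Mono ((F.shift i).map (Triangle.mk (Sigma.ι X n ≫ π) c d).mor₁) :=
      (F.homologySequence_exact₁ _ hTZ (i - 1) i (by omega)).mono_g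
        ((hvan (i - 1) (by omega)).eq_of_src _ _)
    have hepi2 : Epi ((F.shift i).map (Triangle.mk (Sigma.ι X n ≫ π) c d).mor₁) :=
      (F.homologySequence_exact₂ _ hTZ i).epi_f ((hvan i (by omega)).eq_of_tgt _ _)
    haveI hmono' : Mono (F.map ((Sigma.ι X n ≫ π)⟦i⟧')) := hmono
    haveI hepi' : Epi (F.map ((Sigma.ι X n ≫ π)⟦i⟧')) := hepi2
    haveI hs : IsIso (F.map ((Sigma.ι X n ≫ π)⟦i⟧')) :=
      isIso_of_mono_of_epi (F.map ((Sigma.ι X n ≫ π)⟦i⟧'))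
    have hcomp : F.map ((Sigma.ι X n ≫ π)⟦i⟧') ≫ F.map (g⟦i⟧') = F.map ((f n)⟦i⟧') := by
      rw [← F.map_comp, ← Functor.map_comp, hg n]
    haveI hfi : IsIso (F.map ((Sigma.ι X n ≫ π)⟦i⟧') ≫ F.map (g⟦i⟧')) := by
      rw [hcomp]
      exact hM i n hn1
    exact IsIso.of_isIso_comp_left (F.map ((Sigma.ι X n ≫ π)⟦i⟧')) (F.map (g⟦i⟧'))
  refine ⟨hgiso, ?_⟩
  -- Step 3: conclude that `g` is an isomorphism using non-degeneracy.
  obtain ⟨Q, p, q, hTg⟩ := distinguished_cocone_triangle g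
  have hQ : ∀ i : ℤ, IsZero (F.obj (Q⟦i⟧)) := by
    intro i
    haveI h1 : IsIso ((F.shift i).map g) := hgiso i
    haveI h2 : IsIso ((F.shift (i + 1)).map g) := hgiso (i + 1)
    exact isZero_mid ((F.shift i).map g) ((F.shift i).map p)
      (F.homologySequenceδ (Triangle.mk g p q) i (i + 1) rfl)
      ((F.shift (i + 1)).map g)
      (F.homologySequence_comp _ hTg i)
      (F.comp_homologySequenceδ _ hTg i (i + 1) rfl)
      (F.homologySequenceδ_comp _ hTg i (i + 1) rfl)
      (F.homologySequence_exact₃ _ hTg i (i + 1) rfl)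
      inferInstance (@IsIso.mono_of_iso _ _ _ _ _ h2)
  have hQzero : IsZero Q := by
    rw [IsZero.iff_id_eq_zero]
    exact t.zero' (𝟙 Q) ((hLE 0 Q).2 (fun i _ => hQ i)) ((hGE 1 Q).2 (fun i _ => hQ i))
  exact (Pretriangulated.Triangle.isZero₃_iff_isIso₁ _ hTg).1 hQzero
end

section
/- Let T be a triangulated category with a t-structure which has derived projectives. Then for all projective objects P, Q of the heart T^♥ and all i ∈ ℤ, one has T(S(P), S(Q)[i]) ≅ T^♥(P,Q) if i = 0 and T(S(P), S(Q)[i]) = 0 if i > 0. In particular P ↦ S(P) defines a fully faithful functor from the category Proj(T^♥) of projective objects of the heart to T. -/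
open CategoryTheory Category Limits Pretriangulated Triangulated

universe v u

variable {C : Type u} [Category.{v} C] [Preadditive C] [HasZeroObject C]
  [HasShift C ℤ] [∀ n : ℤ, (shiftFunctor C n).Additive] [Pretriangulated C]

/-- The heart `T^♥ = T_{≤0} ∩ T_{≥0}` of a t-structure, as a full subcategory. -/
abbrev THeart (t : TStructure C) := ObjectProperty.FullSubcategory (fun X : C => t.le 0 X ∧ t.ge 0 X)

/-- The inclusion `T^♥ ⥤ C`. -/
abbrev THeartIncl (t : TStructure C) : THeart t ⥤ C :=
  ObjectProperty.ι (fun X : C => t.le 0 X ∧ t.ge 0 X)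

/-- The data of the cohomological functor `H⁰ = τ≤0 τ≥0 : C ⥤ T^♥` associated to a
t-structure `t`, axiomatized by its characteristic properties: it is a homological
functor restricting to the identity on the heart, it kills `T_{≥1}` and `T_{≤-1}`,
and it realizes the truncation adjunctions on the aisles
(`Hom(X, Y) ≅ Hom(H⁰X, Y)` for `X ∈ T_{≤0}`, `Y ∈ T^♥`, and dually). -/
structure TCohomology (t : TStructure C) [Abelian (THeart t)] where
  H : C ⥤ THeart t
  homological : H.IsHomological
  restriction : THeartIncl t ⋙ H ≅ 𝟭 (THeart t)
  zero_of_ge : ∀ X : C, t.ge 1 X → IsZero (H.obj X)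
  zero_of_le : ∀ X : C, t.le (-1) X → IsZero (H.obj X)
  bij_le : ∀ (X : C) (Y : THeart t), t.le 0 X →
    Function.Bijective (fun f : X ⟶ Y.obj => H.map f ≫ restriction.hom.app Y)
  bij_ge : ∀ (X : C) (Y : THeart t), t.ge 0 X →
    Function.Bijective (fun f : Y.obj ⟶ X => restriction.inv.app Y ≫ H.map f)

/-- `SP` is *the derived projective associated to* `P ∈ T^♥` when it corepresents the
functor `T^♥(P, H⁰(-))`, i.e. `T(SP, X) ≅ T^♥(P, H⁰X)` naturally in `X`. -/
def IsDerivedProjective (t : TStructure C) [Abelian (THeart t)] (h : TCohomology t)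
    (P : THeart t) (SP : C) : Prop :=
  ∃ e : ∀ X : C, (SP ⟶ X) ≃ (P ⟶ h.H.obj X),
    ∀ (X Y : C) (f : X ⟶ Y) (g : SP ⟶ X), e Y (g ≫ f) = e X g ≫ h.H.map f

namespace DPAux

variable (t : TStructure C) [Abelian (THeart t)] (h : TCohomology t)

/-- A derived projective is left orthogonal to `T_{≥1}`. -/
lemma hom_eq_zero_of_ge_one {Q : THeart t} {SQ : C}
    (e : ∀ X : C, (SQ ⟶ X) ≃ (Q ⟶ h.H.obj X)) {Z : C} (hZ : t.ge 1 Z)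
    (g : SQ ⟶ Z) : g = 0 :=
  (e Z).injective ((h.zero_of_ge Z hZ).eq_of_tgt _ _)

/-- A derived projective lies in `T_{≤0}`. -/
lemma le_zero {Q : THeart t} {SQ : C}
    (e : ∀ X : C, (SQ ⟶ X) ≃ (Q ⟶ h.H.obj X)) : t.le 0 SQ := by
  obtain ⟨X, Y, hX, hY, f, g, w, hT⟩ := t.exists_triangle_zero_one SQ
  have hg : g = 0 := hom_eq_zero_of_ge_one t h e hY g
  have hYzero : IsZero Y := by
    rw [IsZero.iff_id_eq_zero]
    obtain ⟨l, hl⟩ := Pretriangulated.Triangle.yoneda_exact₃ _ hT (𝟙 Y)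
      (by change g ≫ 𝟙 Y = 0; rw [comp_id, hg])
    have hX1 : t.le 0 (X⟦(1:ℤ)⟧) :=
      t.le_monotone (show (-1 : ℤ) ≤ 0 by omega) _ (t.le_shift 0 1 (-1) (by omega) X hX)
    rw [hl, t.zero' l hX1 hY, comp_zero]
    rfl
  have : IsIso f := (Pretriangulated.Triangle.isZero₃_iff_isIso₁ _ hT).1 hYzero
  exact (t.le 0).prop_of_iso (asIso f) hX

/-- The unit `u := e SQ (𝟙 SQ) : Q ⟶ H⁰(SQ)` is an isomorphism. -/
lemma exists_inverse {Q : THeart t} {SQ : C}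
    (e : ∀ X : C, (SQ ⟶ X) ≃ (Q ⟶ h.H.obj X))
    (he : ∀ (X Y : C) (f : X ⟶ Y) (g : SQ ⟶ X), e Y (g ≫ f) = e X g ≫ h.H.map f) :
    ∃ v : h.H.obj SQ ⟶ Q, e SQ (𝟙 SQ) ≫ v = 𝟙 Q ∧ v ≫ e SQ (𝟙 SQ) = 𝟙 (h.H.obj SQ) := by
  have hLE : t.le 0 SQ := le_zero t h e
  set u : Q ⟶ h.H.obj SQ := e SQ (𝟙 SQ) with hu_def
  -- the two corepresentability bijections on the heart
  set Φ : ∀ Y : THeart t, (SQ ⟶ Y.obj) → (h.H.obj SQ ⟶ Y) :=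
    fun Y f => h.H.map f ≫ h.restriction.hom.app Y with hΦ_def
  have hΦ : ∀ Y, Function.Bijective (Φ Y) := fun Y => h.bij_le SQ Y hLE
  set Ψ : ∀ Y : THeart t, (SQ ⟶ Y.obj) → (Q ⟶ Y) :=
    fun Y f => e Y.obj f ≫ h.restriction.hom.app Y with hΨ_def
  have hΨ : ∀ Y, Function.Bijective (Ψ Y) := by
    intro Y
    constructor
    · intro a b hab
      apply (e Y.obj).injective
      have : (e Y.obj a ≫ h.restriction.hom.app Y) ≫ h.restriction.inv.app Y
          = (e Y.obj b ≫ h.restriction.hom.app Y) ≫ h.restriction.inv.app Y := by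
        rw [show e Y.obj a ≫ h.restriction.hom.app Y = Ψ Y a from rfl,
          show e Y.obj b ≫ h.restriction.hom.app Y = Ψ Y b from rfl, hab]
      simpa using this
    · intro k
      refine ⟨(e Y.obj).symm (k ≫ h.restriction.inv.app Y), ?_⟩
      simp [hΨ_def]
  -- naturality of the two bijections in the heart variable
  have natΦ : ∀ (Y Y' : THeart t) (f : SQ ⟶ Y.obj) (k : Y ⟶ Y'),
      Φ Y' (f ≫ (THeartIncl t).map k) = Φ Y f ≫ k := by
    intro Y Y' f k
    simp only [hΦ_def, Functor.map_comp, assoc]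
    rw [show h.H.map ((THeartIncl t).map k) = (THeartIncl t ⋙ h.H).map k from rfl,
      h.restriction.hom.naturality k]
    simp
  have natΨ : ∀ (Y Y' : THeart t) (f : SQ ⟶ Y.obj) (k : Y ⟶ Y'),
      Ψ Y' (f ≫ (THeartIncl t).map k) = Ψ Y f ≫ k := by
    intro Y Y' f k
    simp only [hΨ_def]
    rw [he Y.obj Y'.obj ((THeartIncl t).map k) f, assoc,
      show h.H.map ((THeartIncl t).map k) = (THeartIncl t ⋙ h.H).map k from rfl,
      h.restriction.hom.naturality k]
    simp
  -- the counits
  obtain ⟨δ, hδ⟩ := (hΦ (h.H.obj SQ)).2 (𝟙 (h.H.obj SQ))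
  set ε : SQ ⟶ Q.obj := (e Q.obj).symm (h.restriction.inv.app Q) with hε_def
  have hε : Ψ Q ε = 𝟙 Q := by
    simp [hΨ_def, hε_def]
  set v : h.H.obj SQ ⟶ Q := Φ Q ε with hv_def
  -- `Ψ δ = u`
  have hu : Ψ (h.H.obj SQ) δ = u := by
    have h1 : e (h.H.obj SQ).obj δ = u ≫ h.H.map δ := by
      rw [hu_def, ← he SQ (h.H.obj SQ).obj δ (𝟙 SQ), id_comp]
    rw [hΨ_def]
    dsimp only
    rw [h1, assoc, show h.H.map δ ≫ h.restriction.hom.app (h.H.obj SQ)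
      = Φ (h.H.obj SQ) δ from rfl, hδ, comp_id]
  -- triangle identities
  have hδε : δ = ε ≫ (THeartIncl t).map u := by
    apply (hΨ (h.H.obj SQ)).1
    rw [hu, natΨ Q (h.H.obj SQ) ε u, hε, id_comp]
  have hεv : ε = δ ≫ (THeartIncl t).map v := by
    apply (hΦ Q).1
    rw [← hv_def, natΦ (h.H.obj SQ) Q δ v, hδ, id_comp]
  refine ⟨v, ?_, ?_⟩
  · -- u ≫ v = 𝟙 Q
    have : ε ≫ (THeartIncl t).map (u ≫ v) = ε := by
      rw [Functor.map_comp, ← assoc, ← hδε, ← hεv]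
    calc (e SQ (𝟙 SQ)) ≫ v = Ψ Q ε ≫ (u ≫ v) := by rw [hε, id_comp]
      _ = Ψ Q (ε ≫ (THeartIncl t).map (u ≫ v)) := (natΨ Q Q ε (u ≫ v)).symm
      _ = 𝟙 Q := by rw [this, hε]
  · -- v ≫ u = 𝟙
    have : δ ≫ (THeartIncl t).map (v ≫ u) = δ := by
      rw [Functor.map_comp, ← assoc, ← hεv, ← hδε]
    calc v ≫ (e SQ (𝟙 SQ)) = Φ (h.H.obj SQ) δ ≫ (v ≫ u) := by rw [hδ, id_comp]
      _ = Φ (h.H.obj SQ) (δ ≫ (THeartIncl t).map (v ≫ u)) :=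
          (natΦ (h.H.obj SQ) (h.H.obj SQ) δ (v ≫ u)).symm
      _ = 𝟙 (h.H.obj SQ) := by rw [this, hδ]

end DPAux

/-- Let `C` be a triangulated category with a t-structure `t` which has
derived projectives. Then for all projectives `P, Q` of the heart and corresponding
derived projectives `SP, SQ`: `T(SP, SQ⟦i⟧) = 0` for `i > 0` and `T(SP, SQ) ≅ T^♥(P, Q)`.
In particular the assignment `P ↦ S(P)` can be realized as a fully faithful functor from
the category of projective objects of the heart to `C`. -/
theorem statement11 (t : TStructure C) [Abelian (THeart t)] (h : TCohomology t)
    (hDP : ∀ P : THeart t, Projective P → ∃ SP : C, IsDerivedProjective t h P SP) :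
    (∀ (P Q : THeart t), Projective P → Projective Q → ∀ SP SQ : C,
      IsDerivedProjective t h P SP → IsDerivedProjective t h Q SQ →
        (∀ i : ℤ, 0 < i → ∀ g : SP ⟶ SQ⟦i⟧, g = 0) ∧
        Nonempty ((SP ⟶ SQ) ≃ (P ⟶ Q))) ∧
    ∃ F : ObjectProperty.FullSubcategory (fun P : THeart t => Projective P) ⥤ C,
      F.Full ∧ F.Faithful ∧
        ∀ P : ObjectProperty.FullSubcategory (fun P : THeart t => Projective P),
          IsDerivedProjective t h P.obj (F.obj P) := by
  constructor
  · intro P Q _ _ SP SQ hSP hSQ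
    obtain ⟨eP, heP⟩ := hSP
    obtain ⟨eQ, heQ⟩ := hSQ
    constructor
    · intro i hi g
      have hLE : t.le 0 SQ := DPAux.le_zero t h eQ
      have h1 : t.le (-1) (SQ⟦i⟧) :=
        t.le_monotone (show -i ≤ (-1 : ℤ) by omega) _
          (t.le_shift 0 i (-i) (by omega) SQ hLE)
      have hz := h.zero_of_le _ h1
      exact (eP (SQ⟦i⟧)).injective (hz.eq_of_tgt _ _)
    · obtain ⟨v, hv1, hv2⟩ := DPAux.exists_inverse t h eQ heQ
      refine ⟨(eP SQ).trans ⟨fun k => k ≫ v, fun k => k ≫ eQ SQ (𝟙 SQ), ?_, ?_⟩⟩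
      · intro k
        show (k ≫ v) ≫ eQ SQ (𝟙 SQ) = k
        rw [assoc, hv2, comp_id]
      · intro k
        show (k ≫ eQ SQ (𝟙 SQ)) ≫ v = k
        rw [assoc, hv1, comp_id]
  · -- construction of the fully faithful functor
    choose S hS using hDP
    set SP : ObjectProperty.FullSubcategory (fun P : THeart t => Projective P) → C :=
      fun P => S P.obj P.property with hSP_def
    have hS' : ∀ P : ObjectProperty.FullSubcategory (fun P : THeart t => Projective P),
        IsDerivedProjective t h P.obj (SP P) := fun P => hS P.obj P.property
    set E : ∀ (P : ObjectProperty.FullSubcategory (fun P : THeart t => Projective P)) (X : C),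
        (SP P ⟶ X) ≃ (P.obj ⟶ h.H.obj X) := fun P => (hS' P).choose with hE_def
    have hE : ∀ (P : ObjectProperty.FullSubcategory (fun P : THeart t => Projective P))
        (X Y : C) (f : X ⟶ Y) (g : SP P ⟶ X),
        E P Y (g ≫ f) = E P X g ≫ h.H.map f := fun P => (hS' P).choose_spec
    set u : ∀ P : ObjectProperty.FullSubcategory (fun P : THeart t => Projective P),
        (P.obj ⟶ h.H.obj (SP P)) := fun P => E P (SP P) (𝟙 (SP P)) with hu_def
    have hv : ∀ P : ObjectProperty.FullSubcategory (fun P : THeart t => Projective P),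
        ∃ v : h.H.obj (SP P) ⟶ P.obj, u P ≫ v = 𝟙 P.obj ∧ v ≫ u P = 𝟙 (h.H.obj (SP P)) :=
      fun P => DPAux.exists_inverse t h (E P) (hE P)
    choose V hV1 hV2 using hv
    -- the key compatibility
    have key : ∀ (P P' : ObjectProperty.FullSubcategory (fun P : THeart t => Projective P))
        (φ : SP P ⟶ SP P'), u P ≫ h.H.map φ = E P (SP P') φ := by
      intro P P' φ
      rw [hu_def]
      dsimp only
      rw [← hE P (SP P) (SP P') φ (𝟙 (SP P)), id_comp]
    refine ⟨{
      obj := SP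
      map := fun {P P'} f => (E P (SP P')).symm (f.hom ≫ u P')
      map_id := fun P => by
        have hid : (𝟙 P : P ⟶ P).hom = 𝟙 P.obj := rfl
        rw [hid, id_comp, Equiv.symm_apply_eq]
      map_comp := fun {X Y Z} f g => by
        have hcomp : (f ≫ g : X ⟶ Z).hom
            = @CategoryStruct.comp (THeart t) _ X.obj Y.obj Z.obj f.hom g.hom := rfl
        apply (E X (SP Z)).injective
        rw [Equiv.apply_symm_apply, hE X (SP Y) (SP Z) _ _, Equiv.apply_symm_apply,
          hcomp, assoc, assoc, key Y Z ((E Y (SP Z)).symm (g.hom ≫ u Z)),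
          Equiv.apply_symm_apply]
    }, ?_, ?_, fun P => hS' P⟩
    · refine ⟨fun {X Y} φ => ⟨⟨(E X (SP Y) φ ≫ V Y : X.obj ⟶ Y.obj)⟩, ?_⟩⟩
      dsimp only
      rw [assoc, hV2, comp_id, Equiv.symm_apply_apply]
    · refine ⟨fun {X Y} f f' hff' => ?_⟩
      dsimp only at hff'
      have h1 : (f.hom ≫ u Y : X.obj ⟶ h.H.obj (SP Y))
          = @CategoryStruct.comp (THeart t) _ X.obj Y.obj (h.H.obj (SP Y)) f'.hom (u Y) := by
        have := congrArg (E X (SP Y)) hff'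
        rwa [Equiv.apply_symm_apply, Equiv.apply_symm_apply] at this
      have := congrArg (fun k => k ≫ V Y) h1
      ext1
      rwa [assoc, assoc, hV1, comp_id, comp_id] at this
end

section
/- Let T be a triangulated category with a t-structure which has derived projectives, and let (P_i)_{i∈I} be a family of projective objects of the heart T^♥ such that the coproduct P = ⊕_i P_i exists in T. Then P ∈ T_{≤0}, the object H^0(P) is a coproduct of the family (P_i) in T^♥ (in particular H^0(P) is projective in T^♥), and S(H^0(P)) ≅ ⊕_i S(P_i) in T; in other words, the derived projective functor S(−) commutes with such coproducts. -/
open CategoryTheory Category Limits Pretriangulated Triangulated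

universe v u

variable {C : Type u} [Category.{v} C] [Preadditive C] [HasZeroObject C]
  [HasShift C ℤ] [∀ n : ℤ, (shiftFunctor C n).Additive] [Pretriangulated C]

/-- Let `C` be a triangulated category with a t-structure `t` which has
derived projectives, and let `(Pᵢ)ᵢ` be a family of projective objects of the heart such
that the coproduct `P = ∐ᵢ Pᵢ` exists in `C`. Then `P ∈ T_{≤0}`, the object `H⁰(P)` is a
coproduct of the family `(Pᵢ)` in the heart (in particular it is projective), and for any
derived projectives `SPᵢ` of the `Pᵢ` and `SQ` of `H⁰(P)`, the object `SQ` is a coproduct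
of the `SPᵢ` in `C` (i.e. `S(H⁰(P)) ≅ ⊕ᵢ S(Pᵢ)`: `S(-)` commutes with such coproducts). -/
theorem statement12 (t : TStructure C) [Abelian (THeart t)] (h : TCohomology t)
    (hDP : ∀ P : THeart t, Projective P → ∃ SP : C, IsDerivedProjective t h P SP)
    {I : Type*} (P : I → THeart t) (hP : ∀ i, Projective (P i))
    [HasCoproduct fun i => (P i).obj] :
    t.le 0 (∐ fun i => (P i).obj) ∧
    Nonempty (IsColimit (Cofan.mk (h.H.obj (∐ fun i => (P i).obj))
      (fun i => h.restriction.inv.app (P i) ≫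
        h.H.map (Sigma.ι (fun i => (P i).obj) i)))) ∧
    Projective (h.H.obj (∐ fun i => (P i).obj)) ∧
    (∀ (SP : I → C) (SQ : C), (∀ i, IsDerivedProjective t h (P i) (SP i)) →
      IsDerivedProjective t h (h.H.obj (∐ fun i => (P i).obj)) SQ →
        ∃ g : ∀ i, SP i ⟶ SQ, Nonempty (IsColimit (Cofan.mk SQ g))) := by
  set Pc : C := ∐ fun i => (P i).obj with hPcdef
  let lift : ∀ {A B : THeart t}, (A.obj ⟶ B.obj) → (A ⟶ B) := fun f => ObjectProperty.homMk f
  -- Step 1 : `Pc ∈ T_{≤0}`.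
  have hle : t.le 0 Pc := by
    obtain ⟨X, Y, hX, hY, f, g, co, mem⟩ := t.exists_triangle_zero_one Pc
    have hg : g = 0 := by
      apply Sigma.hom_ext
      intro i
      rw [comp_zero]
      exact t.zero' _ (P i).property.1 hY
    have hY0 : IsZero Y := by
      obtain ⟨q, hq⟩ := Triangle.yoneda_exact₃ _ mem (𝟙 Y) (by simp [hg]; exact zero_comp)
      have hX1 : t.le 0 (X⟦(1:ℤ)⟧) :=
        t.le_monotone (show (-1:ℤ) ≤ 0 by omega) _ (t.le_shift 0 1 (-1) (by omega) X hX)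
      have hq0 : q = 0 := t.zero' q hX1 hY
      rw [IsZero.iff_id_eq_zero, hq]
      simp only [Triangle.mk_mor₃] at hq0 ⊢
      rw [hq0]; exact comp_zero
    have : IsIso f := (Triangle.isZero₃_iff_isIso₁ _ mem).1 hY0
    exact ((t.le 0).prop_iff_of_iso (asIso f)).1 hX
  -- The adjunction-type bijection on the aisle, as an equivalence.
  let e : ∀ Y : THeart t, (Pc ⟶ Y.obj) ≃ (h.H.obj Pc ⟶ Y) :=
    fun Y => Equiv.ofBijective _ (h.bij_le Pc Y hle)
  have he : ∀ (Y : THeart t) (ψ : Pc ⟶ Y.obj),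
      e Y ψ = h.H.map ψ ≫ h.restriction.hom.app Y := fun _ _ => rfl
  -- the legs of the cofan in the heart
  let leg : ∀ i, P i ⟶ h.H.obj Pc := fun i =>
    h.restriction.inv.app (P i) ≫ h.H.map (Sigma.ι (fun i => (P i).obj) i)
  -- key computation : `leg i ≫ e Y ψ = ι i ≫ ψ`.
  have key : ∀ (Y : THeart t) (ψ : Pc ⟶ Y.obj) (i : I),
      leg i ≫ e Y ψ = (lift (Sigma.ι (fun i => (P i).obj) i ≫ ψ)) := by
    intro Y ψ i
    have nat := h.restriction.inv.naturality
      (lift (Sigma.ι (fun i => (P i).obj) i ≫ ψ))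
    simp only [Functor.id_map] at nat
    rw [he]
    calc (h.restriction.inv.app (P i) ≫ h.H.map (Sigma.ι (fun i => (P i).obj) i)) ≫
          (h.H.map ψ ≫ h.restriction.hom.app Y)
        = (h.restriction.inv.app (P i) ≫
            (THeartIncl t ⋙ h.H).map (lift (Sigma.ι (fun i => (P i).obj) i ≫ ψ))) ≫
            h.restriction.hom.app Y := by
          simp only [Functor.comp_map, assoc]
          congr 1
          rw [← h.H.map_comp_assoc]
          rfl
      _ = (lift (Sigma.ι (fun i => (P i).obj) i ≫ ψ)) ≫
            h.restriction.inv.app Y ≫ h.restriction.hom.app Y := by rw [← nat, assoc]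
      _ = _ := by simp
  -- Step 2 : `H⁰(Pc)` with the legs `leg i` is a coproduct of the `P i` in the heart.
  have colim2 : IsColimit (Cofan.mk (h.H.obj Pc) leg) := by
    refine mkCofanColimit _
      (fun s => e s.pt (Sigma.desc fun i => ((THeartIncl t).map (s.inj i)))) ?_ ?_
    · intro s i
      show leg i ≫ e s.pt (Sigma.desc fun i => (THeartIncl t).map (s.inj i)) = s.inj i
      rw [key]
      exact ObjectProperty.hom_ext (h := Sigma.ι_desc _ _)
    · intro s m hm
      have hm' : ∀ i, leg i ≫ m = s.inj i := fun i => hm i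
      have : m = e s.pt ((e s.pt).symm m) := ((e s.pt).apply_symm_apply m).symm
      rw [this]
      congr 1
      apply Sigma.hom_ext
      intro i
      have h1 : Sigma.ι (fun i => (P i).obj) i ≫ (e s.pt).symm m =
          (THeartIncl t).map (leg i ≫ m) := by
        have := key s.pt ((e s.pt).symm m) i
        rw [Equiv.apply_symm_apply] at this
        exact congrArg (THeartIncl t).map this.symm
      rw [h1, hm' i]
      exact (Sigma.ι_desc (f := fun i => (P i).obj) (fun i => (THeartIncl t).map (s.inj i)) i).symm
  -- Step 3 : projectivity of `H⁰(Pc)`.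
  have hproj : Projective (h.H.obj Pc) := by
    constructor
    intro E X' f' π hπ
    choose g' hg' using fun i => ((hP i).factors (leg i ≫ f') π)
    refine ⟨colim2.desc (Cofan.mk E g'), ?_⟩
    apply colim2.hom_ext
    rintro ⟨i⟩
    have fac := colim2.fac (Cofan.mk E g') ⟨i⟩
    simp only [Cofan.mk_pt, Cofan.mk_ι_app] at fac ⊢
    rw [← assoc, fac, hg' i]
  refine ⟨hle, ⟨colim2⟩, hproj, ?_⟩
  -- Step 4 : `SQ` is the coproduct of the `SP i`.
  rintro SP SQ hSP hSQ
  choose eP heP using hSP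
  obtain ⟨eQ, heQ⟩ := hSQ
  let g : ∀ i, SP i ⟶ SQ := fun i => (eP i SQ).symm (leg i ≫ eQ SQ (𝟙 SQ))
  have compat : ∀ (X : C) (u : SQ ⟶ X) (i : I),
      eP i X (g i ≫ u) = leg i ≫ eQ X u := by
    intro X u i
    rw [heP i SQ X u (g i)]
    have : eP i SQ (g i) = leg i ≫ eQ SQ (𝟙 SQ) := (eP i SQ).apply_symm_apply _
    rw [this, assoc, ← heQ SQ X u (𝟙 SQ), id_comp]
  refine ⟨g, ⟨?_⟩⟩
  refine mkCofanColimit _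
    (fun s => (eQ s.pt).symm (colim2.desc (Cofan.mk (h.H.obj s.pt)
      (fun i => eP i s.pt (s.inj i))))) ?_ ?_
  · intro s i
    apply (eP i s.pt).injective
    show eP i s.pt (g i ≫ (eQ s.pt).symm (colim2.desc (Cofan.mk (h.H.obj s.pt)
      (fun i => eP i s.pt (s.inj i))))) = eP i s.pt (s.inj i)
    rw [compat, Equiv.apply_symm_apply]
    have fac : leg i ≫ colim2.desc (Cofan.mk (h.H.obj s.pt) (fun i => eP i s.pt (s.inj i)))
        = eP i s.pt (s.inj i) :=
      colim2.fac (Cofan.mk (h.H.obj s.pt) (fun i => eP i s.pt (s.inj i))) ⟨i⟩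
    exact fac
  · intro s m hm
    have hm' : ∀ i, g i ≫ m = s.inj i := fun i => hm i
    have : m = (eQ s.pt).symm (eQ s.pt m) := ((eQ s.pt).symm_apply_apply m).symm
    rw [this]
    congr 1
    apply colim2.hom_ext
    rintro ⟨i⟩
    have fac : leg i ≫ colim2.desc (Cofan.mk (h.H.obj s.pt) (fun i => eP i s.pt (s.inj i)))
        = eP i s.pt (s.inj i) :=
      colim2.fac (Cofan.mk (h.H.obj s.pt) (fun i => eP i s.pt (s.inj i))) ⟨i⟩
    show leg i ≫ eQ s.pt m = leg i ≫ colim2.desc (Cofan.mk (h.H.obj s.pt)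
      (fun i => eP i s.pt (s.inj i)))
    rw [fac, ← compat, hm' i]
end

section
/- Let F : T → S be an exact functor between triangulated categories with t-structures, and assume both T and S have derived projectives. If F admits a t-exact right adjoint G, then F preserves derived projectives: for every projective object P of T^♥ one has F(S_T(P)) ≅ S_S(F^♥(P)), where F^♥ is the induced functor between the hearts; in particular F restricts to a functor DGProj(T) → DGProj(S). -/
open CategoryTheory Category Limits Pretriangulated Triangulated

universe v u

variable {C : Type u} [Category.{v} C] [Preadditive C] [HasZeroObject C]
  [HasShift C ℤ] [∀ n : ℤ, (shiftFunctor C n).Additive] [Pretriangulated C]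

section AuxLemmas

variable (t : TStructure C)

lemma aux_zero_of_lt {X Y : C} (f : X ⟶ Y) {a b : ℤ} (hX : t.le a X) (hY : t.ge b Y)
    (hab : a < b) : f = 0 := by
  have hX' : t.le 0 (X⟦a⟧) := t.le_shift a a 0 (by omega) X hX
  have hY' : t.ge 1 (Y⟦a⟧) := t.ge_shift (a+1) a 1 (by omega) Y (t.ge_antitone (by omega) Y hY)
  have h0 := t.zero' ((shiftFunctor C a).map f) hX' hY'
  apply (shiftFunctor C a).map_injective
  rw [h0, Functor.map_zero]

lemma aux_le_of_orth (n : ℤ) (X : C)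
    (h : ∀ Y : C, t.ge (n+1) Y → ∀ g : X ⟶ Y, g = 0) : t.le n X := by
  obtain ⟨X', Y', hX', hY', f, g, δ, hT⟩ := t.exists_triangle X n (n+1) rfl
  have hg : g = 0 := h Y' hY' g
  obtain ⟨ψ, hψ⟩ := Triangle.yoneda_exact₃ _ hT (𝟙 Y') (by simp [hg]; exact zero_comp)
  have hψ0 : ψ = 0 :=
    aux_zero_of_lt t ψ (t.le_shift n 1 (n-1) (by omega) X' hX') hY' (by omega)
  have hY'0 : IsZero Y' := by
    rw [IsZero.iff_id_eq_zero, hψ, hψ0, comp_zero]; rfl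
  have hiso : IsIso f := (Triangle.isZero₃_iff_isIso₁ _ hT).1 hY'0
  exact ((t.le n).prop_iff_of_iso (asIso f)).1 hX'

lemma aux_ge_of_orth (n : ℤ) (X : C)
    (h : ∀ W : C, t.le (n-1) W → ∀ g : W ⟶ X, g = 0) : t.ge n X := by
  obtain ⟨X', Y', hX', hY', f, g, δ, hT⟩ := t.exists_triangle X (n-1) n (by omega)
  have hf : f = 0 := h X' hX' f
  obtain ⟨ψ, hψ⟩ := Triangle.coyoneda_exact₂ _ (inv_rot_of_distTriang _ hT) (𝟙 X')
    (by simp only [Triangle.invRotate]; dsimp; simp [hf]; exact comp_zero)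
  have hψ0 : ψ = 0 :=
    aux_zero_of_lt t ψ hX' (t.ge_shift n (-1) (n+1) (by omega) Y' hY') (by omega)
  have hX'0 : IsZero X' := by
    rw [IsZero.iff_id_eq_zero, hψ, hψ0, zero_comp]; rfl
  have hiso : IsIso g := (Triangle.isZero₁_iff_isIso₂ _ hT).1 hX'0
  exact ((t.ge n).prop_iff_of_iso (asIso g)).2 hY'

lemma aux_heart_trunc (X : C) (hX : t.le 0 X) :
    ∃ (W V : C) (_ : t.le (-1) W) (_ : t.le 0 V) (_ : t.ge 0 V)
      (a : W ⟶ X) (b : X ⟶ V) (c : V ⟶ W⟦(1:ℤ)⟧),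
      Triangle.mk a b c ∈ distTriang C := by
  obtain ⟨W, V, hW, hV2, a, b, c, hT⟩ := t.exists_triangle X (-1) 0 (by omega)
  refine ⟨W, V, hW, ?_, hV2, a, b, c, hT⟩
  apply aux_le_of_orth t 0 V
  intro Y hY g
  have h1 : b ≫ g = 0 := aux_zero_of_lt t _ hX hY (by omega)
  obtain ⟨ψ, hψ⟩ := Triangle.yoneda_exact₃ _ hT g h1
  have hψ0 : ψ = 0 :=
    aux_zero_of_lt t ψ (t.le_shift (-1) 1 (-2) (by omega) W hW) hY (by omega)
  rw [hψ, hψ0, comp_zero]; rfl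

variable [Abelian (THeart t)]

lemma aux_H_map_heart (h : TCohomology t) {A B : THeart t} (u : A ⟶ B) :
    h.H.map ((THeartIncl t).map u) =
      h.restriction.hom.app A ≫ u ≫ h.restriction.inv.app B := by
  have := h.restriction.hom.naturality u
  dsimp at this
  rw [← assoc, ← this]
  simp

lemma aux_cone_le (h : TCohomology t) {A B : THeart t} (u : A ⟶ B) (hu : Epi u) {Cn : C}
    {p : B.obj ⟶ Cn} {q : Cn ⟶ A.obj⟦(1:ℤ)⟧}
    (hT : Triangle.mk ((THeartIncl t).map u) p q ∈ distTriang C) :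
    t.le (-1) Cn := by
  letI : Preadditive (THeart t) := Abelian.toPreadditive
  haveI inst1 : h.H.IsHomological := h.homological
  haveI inst2 := h.homological.toPreservesZeroMorphisms
  -- (a) Cn is ≤ 0
  have hCnLE0 : t.le 0 Cn := by
    apply aux_le_of_orth t 0 Cn
    intro Y hY g
    have hpg : p ≫ g = 0 := aux_zero_of_lt t _ B.2.1 hY (by omega)
    obtain ⟨g', hg'⟩ := Triangle.yoneda_exact₃ _ hT g hpg
    have hg'0 : g' = 0 :=
      aux_zero_of_lt t g' (t.le_shift 0 1 (-1) (by omega) A.obj A.2.1) hY (by omega)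
    rw [hg', hg'0, comp_zero]; rfl
  -- (b) H(Cn) = 0
  have hHCn : IsZero (h.H.obj Cn) := by
    have hT' := rot_of_distTriang _ hT
    have hS := h.H.map_distinguished_exact _ hT'
    have hzA : IsZero (h.H.obj (A.obj⟦(1:ℤ)⟧)) :=
      h.zero_of_le _ (t.le_shift 0 1 (-1) (by omega) A.obj A.2.1)
    have hepi : Epi (h.H.map p) := hS.epi_f (hzA.eq_of_tgt _ _)
    have hHu : Epi (h.H.map ((THeartIncl t).map u)) := by
      rw [aux_H_map_heart t h u]
      haveI := hu
      infer_instance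
    have hcomp : h.H.map ((THeartIncl t).map u) ≫ h.H.map p = 0 := by
      rw [← h.H.map_comp]
      have : (THeartIncl t).map u ≫ p = 0 := comp_distTriang_mor_zero₁₂ _ hT
      rw [this, Functor.map_zero]
    have hHp0 : h.H.map p = 0 := by
      rw [← cancel_epi (h.H.map ((THeartIncl t).map u)), hcomp, comp_zero]
    rw [IsZero.iff_id_eq_zero]
    rw [← cancel_epi (h.H.map p), hHp0]
    simp
  -- (c) conclude
  apply aux_le_of_orth t (-1) Cn
  intro Y hY g
  obtain ⟨Y₀, Y₁, hY₀, hY₁, m, n, o, hTY⟩ := t.exists_triangle Y 0 1 (by omega)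
  have hY₀ge : t.ge 0 Y₀ := by
    apply aux_ge_of_orth t 0 Y₀
    intro W hW w
    have hwm : w ≫ m = 0 := aux_zero_of_lt t _ hW hY (by omega)
    obtain ⟨ψ, hψ⟩ := Triangle.coyoneda_exact₂ _ (inv_rot_of_distTriang _ hTY) w
      (by simp only [Triangle.invRotate]; dsimp; exact hwm)
    have hψ0 : ψ = 0 :=
      aux_zero_of_lt t ψ hW (t.ge_shift 1 (-1) 2 (by omega) Y₁ hY₁) (by omega)
    rw [hψ, hψ0, zero_comp]; rfl
  have hgn : g ≫ n = 0 := aux_zero_of_lt t _ hCnLE0 hY₁ (by omega)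
  obtain ⟨g₀, hg₀⟩ := Triangle.coyoneda_exact₂ _ hTY g hgn
  have hg₀0 : g₀ = 0 := by
    apply (h.bij_le Cn ⟨Y₀, hY₀, hY₀ge⟩ hCnLE0).injective
    exact hHCn.eq_of_src _ _
  rw [hg₀, hg₀0, zero_comp]; rfl

end AuxLemmas

universe v₂ u₂

/-- Let `F : T ⥤ S` be an exact functor between triangulated categories
with t-structures, both having derived projectives. If `F` admits a t-exact right adjoint
`G`, then `F` preserves derived projectives: for every projective `P` of `T^♥` and every
derived projective `SP` associated to `P`, the object `F(SP)` is a derived projective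
associated to `F^♥(P) = H⁰(F(P))` (which is projective in `S^♥`); in particular
`F(S_T(P)) ≅ S_S(F^♥(P))` and `F` restricts to a functor `DGProj(T) → DGProj(S)`. -/
theorem statement16 {D : Type u₂} [Category.{v₂} D] [Preadditive D] [HasZeroObject D]
    [HasShift D ℤ] [∀ n : ℤ, (shiftFunctor D n).Additive] [Pretriangulated D]
    (tC : TStructure C) (tD : TStructure D)
    [Abelian (THeart tC)] [Abelian (THeart tD)]
    (hC : TCohomology tC) (hD : TCohomology tD)
    (hDPC : ∀ P : THeart tC, Projective P → ∃ SP : C, IsDerivedProjective tC hC P SP)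
    (hDPD : ∀ P : THeart tD, Projective P → ∃ SP : D, IsDerivedProjective tD hD P SP)
    (F : C ⥤ D) (G : D ⥤ C)
    [F.CommShift ℤ] [F.IsTriangulated] [G.CommShift ℤ] [G.IsTriangulated]
    (adj : F ⊣ G)
    (hGle : ∀ (n : ℤ) (Y : D), tD.le n Y → tC.le n (G.obj Y))
    (hGge : ∀ (n : ℤ) (Y : D), tD.ge n Y → tC.ge n (G.obj Y))
    (P : THeart tC) (hP : Projective P)
    (SP : C) (hSP : IsDerivedProjective tC hC P SP) :
    Projective (hD.H.obj (F.obj P.obj)) ∧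
      IsDerivedProjective tD hD (hD.H.obj (F.obj P.obj)) (F.obj SP) := by
  -- Step 0: unpack the derived projective structure of SP
  obtain ⟨e, he⟩ := hSP
  -- F preserves LE 0 (F is right t-exact, being left adjoint to the t-exact G)
  have hFle : ∀ X : C, tC.le 0 X → tD.le 0 (F.obj X) := by
    intro X hX
    apply aux_le_of_orth tD 0 (F.obj X)
    intro Y hY g
    apply (adj.homEquiv X Y).injective
    rw [aux_zero_of_lt tC (adj.homEquiv X Y g) hX (hGge _ _ hY) (by omega),
        aux_zero_of_lt tC (adj.homEquiv X Y 0) hX (hGge _ _ hY) (by omega)]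
  have hFPle : tD.le 0 (F.obj P.obj) := hFle P.obj P.2.1
  -- G restricted to the hearts
  let Gob : THeart tD → THeart tC := fun Q => ⟨G.obj Q.obj, hGle 0 _ Q.2.1, hGge 0 _ Q.2.2⟩
  let GobMap : ∀ {Q Q' : THeart tD}, (Q ⟶ Q') → (Gob Q ⟶ Gob Q') := fun {Q Q'} w =>
    ObjectProperty.homMk (G.map ((THeartIncl tD).map w))
  -- the adjunction-type bijection Hom(H(FP), Q) ≃ Hom(P, G♥Q)
  let down : ∀ Q : THeart tD, (F.obj P.obj ⟶ Q.obj) ≃ (hD.H.obj (F.obj P.obj) ⟶ Q) :=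
    fun Q => Equiv.ofBijective _ (hD.bij_le (F.obj P.obj) Q hFPle)
  have down_apply : ∀ (Q : THeart tD) (f : F.obj P.obj ⟶ Q.obj),
      down Q f = hD.H.map f ≫ hD.restriction.hom.app Q := fun _ _ => rfl
  have down_nat : ∀ {Q Q' : THeart tD} (f : F.obj P.obj ⟶ Q.obj) (w : Q ⟶ Q'),
      down Q' (f ≫ (THeartIncl tD).map w) = down Q f ≫ w := by
    intro Q Q' f w
    rw [down_apply, down_apply, hD.H.map_comp, assoc]
    have hnat : hD.H.map ((THeartIncl tD).map w) ≫ hD.restriction.hom.app Q'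
        = hD.restriction.hom.app Q ≫ w := hD.restriction.hom.naturality w
    rw [hnat, assoc]
  let Φ : ∀ Q : THeart tD, (hD.H.obj (F.obj P.obj) ⟶ Q) ≃ (P ⟶ Gob Q) := fun Q =>
    (down Q).symm.trans ((adj.homEquiv P.obj Q.obj).trans (InducedCategory.homEquiv (X := P) (Y := Gob Q)).symm)
  have Φnat : ∀ {Q Q' : THeart tD} (v : hD.H.obj (F.obj P.obj) ⟶ Q) (w : Q ⟶ Q'),
      Φ Q' (v ≫ w) = Φ Q v ≫ GobMap w := by
    intro Q Q' v w
    have h1 : (down Q').symm (v ≫ w) = (down Q).symm v ≫ (THeartIncl tD).map w := by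
      apply (down Q').injective
      rw [Equiv.apply_symm_apply, down_nat, Equiv.apply_symm_apply]
    show (InducedCategory.homEquiv (X := P) (Y := Gob Q')).symm (adj.homEquiv P.obj Q'.obj ((down Q').symm (v ≫ w))) = _
    rw [h1]
    exact InducedCategory.hom_ext (adj.homEquiv_naturality_right _ _)
  -- G♥ preserves epimorphisms
  have hGepi : ∀ {A B : THeart tD} (u : A ⟶ B), Epi u → Epi (GobMap u) := by
    intro A B u hu
    constructor
    intro Z f₁ f₂ hff
    obtain ⟨Cn, p, q, hT⟩ :=
      Pretriangulated.distinguished_cocone_triangle ((THeartIncl tD).map u)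
    have hCn : tD.le (-1) Cn := aux_cone_le tD hD u hu hT
    have hT' := G.map_distinguished _ hT
    have hffC : G.map ((THeartIncl tD).map u) ≫ ((THeartIncl tC).map f₁)
        = G.map ((THeartIncl tD).map u) ≫ ((THeartIncl tC).map f₂) := congrArg (fun k => k.hom) hff
    obtain ⟨g', hg'⟩ := Triangle.yoneda_exact₂ _ hT'
      ((THeartIncl tC).map f₁ - (THeartIncl tC).map f₂)
      (by show G.map ((THeartIncl tD).map u) ≫ _ = 0
          rw [Preadditive.comp_sub, hffC, sub_self])
    have hg'0 : g' = 0 := aux_zero_of_lt tC g' (hGle (-1) Cn hCn) Z.2.2 (by omega)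
    have hd : (THeartIncl tC).map f₁ - (THeartIncl tC).map f₂ = 0 := by
      rw [hg', hg'0, comp_zero]; rfl
    exact InducedCategory.hom_ext (sub_eq_zero.1 hd)
  -- H⁰(F(P)) is projective
  have hQ0 : Projective (hD.H.obj (F.obj P.obj)) := by
    constructor
    intro E X f ee hee
    haveI : Epi (GobMap ee) := hGepi ee hee
    obtain ⟨f', hf'⟩ := hP.factors (Φ X f) (GobMap ee)
    refine ⟨(Φ E).symm f', ?_⟩
    apply (Φ X).injective
    rw [Φnat, Equiv.apply_symm_apply, hf']
  -- the derived projective of H⁰(F(P)) in D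
  obtain ⟨SQ, hSQ⟩ := hDPD (hD.H.obj (F.obj P.obj)) hQ0
  obtain ⟨e₂, he₂⟩ := hSQ
  -- vanishing properties
  have hSPle : tC.le 0 SP := by
    apply aux_le_of_orth tC 0 SP
    intro Y hY g
    exact (e Y).injective ((hC.zero_of_ge Y (by simpa using hY)).eq_of_tgt _ _)
  have hFSPle : tD.le 0 (F.obj SP) := hFle SP hSPle
  have hFSPv : ∀ Y : D, IsZero (hC.H.obj (G.obj Y)) → ∀ g : F.obj SP ⟶ Y, g = 0 := by
    intro Y hz g
    apply (adj.homEquiv SP Y).injective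
    exact (e (G.obj Y)).injective (hz.eq_of_tgt _ _)
  have hFSP1 : ∀ Y : D, tD.ge 1 Y → ∀ g : F.obj SP ⟶ Y, g = 0 :=
    fun Y hY => hFSPv Y (hC.zero_of_ge _ (hGge 1 Y hY))
  have hFSP2 : ∀ Y : D, tD.le (-1) Y → ∀ g : F.obj SP ⟶ Y, g = 0 :=
    fun Y hY => hFSPv Y (hC.zero_of_le _ (hGle (-1) Y hY))
  have hSQ1 : ∀ Y : D, tD.ge 1 Y → ∀ g : SQ ⟶ Y, g = 0 :=
    fun Y hY g => (e₂ Y).injective ((hD.zero_of_ge Y hY).eq_of_tgt _ _)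
  have hSQ2 : ∀ Y : D, tD.le (-1) Y → ∀ g : SQ ⟶ Y, g = 0 :=
    fun Y hY g => (e₂ Y).injective ((hD.zero_of_le Y hY).eq_of_tgt _ _)
  -- the two heart-level corepresentations
  let α : ∀ Y : THeart tD, (F.obj SP ⟶ Y.obj) ≃ (P ⟶ Gob Y) := fun Y =>
    ((adj.homEquiv SP Y.obj).trans (e (G.obj Y.obj))).trans
      ((hC.restriction.app (Gob Y)).homToEquiv)
  let β : ∀ Y : THeart tD, (SQ ⟶ Y.obj) ≃ (P ⟶ Gob Y) := fun Y =>
    ((e₂ Y.obj).trans ((hD.restriction.app Y).homToEquiv)).trans (Φ Y)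
  have αnat : ∀ {Y Y' : THeart tD} (f : F.obj SP ⟶ Y.obj) (w : Y ⟶ Y'),
      α Y' (f ≫ (THeartIncl tD).map w) = α Y f ≫ GobMap w := by
    intro Y Y' f w
    show (e (G.obj Y'.obj)) (adj.homEquiv SP Y'.obj (f ≫ (THeartIncl tD).map w))
          ≫ hC.restriction.hom.app (Gob Y')
        = ((e (G.obj Y.obj)) (adj.homEquiv SP Y.obj f)
          ≫ hC.restriction.hom.app (Gob Y)) ≫ GobMap w
    rw [adj.homEquiv_naturality_right, he, assoc, assoc]
    congr 1
    exact hC.restriction.hom.naturality (GobMap w)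
  have βnat : ∀ {Y Y' : THeart tD} (k : SQ ⟶ Y.obj) (w : Y ⟶ Y'),
      β Y' (k ≫ (THeartIncl tD).map w) = β Y k ≫ GobMap w := by
    intro Y Y' k w
    show Φ Y' ((e₂ Y'.obj) (k ≫ (THeartIncl tD).map w) ≫ hD.restriction.hom.app Y')
        = Φ Y ((e₂ Y.obj) k ≫ hD.restriction.hom.app Y) ≫ GobMap w
    rw [he₂]
    have hmid : ((e₂ Y.obj) k ≫ hD.H.map ((THeartIncl tD).map w))
          ≫ hD.restriction.hom.app Y'
        = ((e₂ Y.obj) k ≫ hD.restriction.hom.app Y) ≫ w := by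
      rw [assoc, assoc]
      congr 1
      exact hD.restriction.hom.naturality w
    rw [hmid]
    exact Φnat _ w
  let γ : ∀ Y : THeart tD, (F.obj SP ⟶ Y.obj) ≃ (SQ ⟶ Y.obj) := fun Y =>
    (α Y).trans (β Y).symm
  have γnat : ∀ {Y Y' : THeart tD} (f : F.obj SP ⟶ Y.obj) (w : Y ⟶ Y'),
      γ Y' (f ≫ (THeartIncl tD).map w) = γ Y f ≫ (THeartIncl tD).map w := by
    intro Y Y' f w
    show (β Y').symm (α Y' (f ≫ (THeartIncl tD).map w))
        = (β Y).symm (α Y f) ≫ (THeartIncl tD).map w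
    apply (β Y').injective
    rw [Equiv.apply_symm_apply, αnat, βnat, Equiv.apply_symm_apply]
  -- the comparison morphism φ : SQ ⟶ F(SP)
  obtain ⟨W, V, hW, hV1, hV2, a, b, c, hTV⟩ := aux_heart_trunc tD (F.obj SP) hFSPle
  have hbc : γ ⟨V, hV1, hV2⟩ b ≫ c = 0 :=
    hSQ2 _ (tD.le_monotone (by omega) _ (tD.le_shift (-1) 1 (-2) (by omega) W hW)) _
  obtain ⟨φ, hφ₀⟩ : ∃ φ : SQ ⟶ F.obj SP, γ ⟨V, hV1, hV2⟩ b = φ ≫ b := Triangle.coyoneda_exact₃ _ hTV (γ ⟨V, hV1, hV2⟩ b) hbc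
  have hφ : γ ⟨V, hV1, hV2⟩ b = φ ≫ b := hφ₀
  have key : ∀ (Y : THeart tD) (f : F.obj SP ⟶ Y.obj), φ ≫ f = γ Y f := by
    intro Y f
    have haf : a ≫ f = 0 := aux_zero_of_lt tD _ hW Y.2.2 (by omega)
    obtain ⟨g, hg⟩ := Triangle.yoneda_exact₂ _ hTV f haf
    let gh : (⟨V, hV1, hV2⟩ : THeart tD) ⟶ Y := ObjectProperty.homMk g
    have hg' : f = b ≫ (THeartIncl tD).map gh := hg
    have hnat := γnat (Y := ⟨V, hV1, hV2⟩) (Y' := Y) b gh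
    rw [hg', hnat, ← assoc, ← hφ]
  have bijheart : ∀ Y : THeart tD,
      Function.Bijective (fun f : F.obj SP ⟶ Y.obj => φ ≫ f) := by
    intro Y
    have hfe : (fun f : F.obj SP ⟶ Y.obj => φ ≫ f) = fun f => γ Y f := funext (key Y)
    rw [hfe]
    exact (γ Y).bijective
  -- dévissage : φ induces a bijection Hom(F(SP), X) ≃ Hom(SQ, X) for every X
  have bijAll : ∀ X : D, Function.Bijective (fun g : F.obj SP ⟶ X => φ ≫ g) := by
    intro X
    obtain ⟨X₀, X₁, hX₀, hX₁, m, nn, o, hTX⟩ := tD.exists_triangle X 0 1 (by omega)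
    obtain ⟨W', V', hW', hV1', hV2', a', b', c', hTV'⟩ := aux_heart_trunc tD X₀ hX₀
    have hX₁' : tD.ge 1 X₁ := by simpa using hX₁
    have bijm : ∀ (B : D), (∀ Y : D, tD.ge 1 Y → ∀ g : B ⟶ Y, g = 0) →
        Function.Bijective (fun g : B ⟶ X₀ => g ≫ m) := by
      intro B hB1
      constructor
      · intro g g' hgg
        have hgg' : g ≫ m = g' ≫ m := hgg
        have hsub : (g - g') ≫ m = 0 := by rw [Preadditive.sub_comp, hgg', sub_self]
        obtain ⟨ψ, hψ⟩ := Triangle.coyoneda_exact₂ _ (inv_rot_of_distTriang _ hTX) (g - g')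
          (by simp only [Triangle.invRotate]; dsimp; exact hsub)
        have hψ0 : ψ = 0 := hB1 _
          (tD.ge_antitone (by omega) _ (tD.ge_shift 1 (-1) 2 (by omega) X₁ hX₁')) ψ
        have hz : g - g' = 0 := by rw [hψ, hψ0, zero_comp]; rfl
        exact sub_eq_zero.1 hz
      · intro k
        have hk : k ≫ nn = 0 := hB1 X₁ hX₁' _
        obtain ⟨g, hg⟩ := Triangle.coyoneda_exact₂ _ hTX k hk
        exact ⟨g, hg.symm⟩
    have bijb : ∀ (B : D), (∀ Y : D, tD.le (-1) Y → ∀ g : B ⟶ Y, g = 0) →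
        Function.Bijective (fun g : B ⟶ X₀ => g ≫ b') := by
      intro B hB2
      constructor
      · intro g g' hgg
        have hgg' : g ≫ b' = g' ≫ b' := hgg
        have hsub : (g - g') ≫ b' = 0 := by rw [Preadditive.sub_comp, hgg', sub_self]
        obtain ⟨ψ, hψ⟩ := Triangle.coyoneda_exact₂ _ hTV' (g - g') hsub
        have hψ0 : ψ = 0 := hB2 _ hW' ψ
        have hz : g - g' = 0 := by rw [hψ, hψ0, zero_comp]; rfl
        exact sub_eq_zero.1 hz
      · intro k
        have hk : k ≫ c' = 0 := hB2 _
          (tD.le_monotone (by omega) _ (tD.le_shift (-1) 1 (-2) (by omega) W' hW')) _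
        obtain ⟨g, hg⟩ := Triangle.coyoneda_exact₃ _ hTV' k hk
        exact ⟨g, hg.symm⟩
    have bm1 := bijm (F.obj SP) hFSP1
    have bm2 := bijm SQ hSQ1
    have bb1 := bijb (F.obj SP) hFSP2
    have bb2 := bijb SQ hSQ2
    have bh := bijheart ⟨V', hV1', hV2'⟩
    constructor
    · intro g g' hgg
      have hgg' : φ ≫ g = φ ≫ g' := hgg
      obtain ⟨g₀, hg₀⟩ := bm1.surjective g
      obtain ⟨g₀', hg₀'⟩ := bm1.surjective g'
      have e1 : g₀ ≫ m = g := hg₀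
      have e2 : g₀' ≫ m = g' := hg₀'
      have h1 : φ ≫ g₀ = φ ≫ g₀' := by
        apply bm2.injective
        show (φ ≫ g₀) ≫ m = (φ ≫ g₀') ≫ m
        rw [assoc, assoc, e1, e2, hgg']
      have h2 : g₀ ≫ b' = g₀' ≫ b' := by
        apply bh.injective
        show φ ≫ (g₀ ≫ b') = φ ≫ (g₀' ≫ b')
        rw [← assoc, ← assoc, h1]
      have h3 : g₀ = g₀' := bb1.injective h2
      rw [← e1, ← e2, h3]
    · intro k
      obtain ⟨k₀, hk₀⟩ := bm2.surjective k
      have e4 : k₀ ≫ m = k := hk₀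
      obtain ⟨l, hl⟩ := bh.surjective (k₀ ≫ b')
      obtain ⟨l₀, hl₀⟩ := bb1.surjective l
      have e5 : l₀ ≫ b' = l := hl₀
      have h4 : φ ≫ l₀ = k₀ := by
        apply bb2.injective
        show (φ ≫ l₀) ≫ b' = k₀ ≫ b'
        rw [assoc, e5]
        exact hl
      refine ⟨l₀ ≫ m, ?_⟩
      show φ ≫ (l₀ ≫ m) = k
      rw [← assoc, h4, e4]
  -- conclusion
  refine ⟨hQ0, ⟨fun X => (Equiv.ofBijective _ (bijAll X)).trans (e₂ X), ?_⟩⟩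
  intro X Y f g
  show e₂ Y (φ ≫ (g ≫ f)) = e₂ X (φ ≫ g) ≫ hD.H.map f
  rw [← assoc]
  exact he₂ X Y f (φ ≫ g)
end

section
/- Let F : T → S be an exact functor between triangulated categories with t-structures, and assume both T and S have derived injectives. If F admits a t-exact left adjoint G, then F preserves derived injectives: for every injective object I of T^♥ one has F(L_T(I)) ≅ L_S(F^♥(I)), where F^♥ is the induced functor between the hearts; in particular F restricts to a functor DGInj(T) → DGInj(S). -/
attribute [-instance] CategoryTheory.Preadditive.fullSubcategory


open CategoryTheory Category Limits Pretriangulated Triangulated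

universe v u

variable {C : Type u} [Category.{v} C] [Preadditive C] [HasZeroObject C]
  [HasShift C ℤ] [∀ n : ℤ, (shiftFunctor C n).Additive] [Pretriangulated C]

/-- `LI` is *the derived injective associated to* `I ∈ T^♥` when it represents the
functor `T^♥(H⁰(-), I)`, i.e. `T(X, LI) ≅ T^♥(H⁰X, I)` naturally in `X`. -/
def IsDerivedInjective (t : TStructure C) [Abelian (THeart t)] (h : TCohomology t)
    (I : THeart t) (LI : C) : Prop :=
  ∃ e : ∀ X : C, (X ⟶ LI) ≃ (h.H.obj X ⟶ I),
    ∀ (X Y : C) (f : X ⟶ Y) (g : Y ⟶ LI), e X (f ≫ g) = h.H.map f ≫ e Y g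

universe v₂ u₂

namespace Statement17Aux

universe w₁ w₂

variable {E : Type w₁} [Category.{w₂} E] [Preadditive E] [HasZeroObject E]
  [HasShift E ℤ] [∀ n : ℤ, (shiftFunctor E n).Additive] [Pretriangulated E]

lemma tzero (t : TStructure E) {a b : ℤ} (h : a < b) {X Y : E}
    (hX : t.le a X) (hY : t.ge b Y) (f : X ⟶ Y) : f = 0 := by
  have hX' : t.le 0 (X⟦a⟧) := t.le_shift a a 0 (add_zero a) X hX
  have hY' : t.ge (b - a) (Y⟦a⟧) := t.ge_shift b a (b - a) (by ring) Y hY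
  have hY'' : t.ge 1 (Y⟦a⟧) := t.ge_antitone (show (1:ℤ) ≤ b - a by omega) _ hY'
  have h0 : (shiftFunctor E a).map f = 0 := t.zero' _ hX' hY''
  apply (shiftFunctor E a).map_injective
  rw [h0, Functor.map_zero]

lemma precomp₂_bij (T : Triangle E) (hT : T ∈ distTriang E) (L : E)
    (h1 : ∀ f : T.obj₁ ⟶ L, f = 0) (h2 : ∀ f : T.obj₁⟦(1:ℤ)⟧ ⟶ L, f = 0) :
    Function.Bijective (fun g : T.obj₃ ⟶ L => T.mor₂ ≫ g) := by
  constructor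
  · intro g g' hgg
    have hz : T.mor₂ ≫ (g - g') = 0 := by
      simp only at hgg
      simp [Preadditive.comp_sub, hgg]
    obtain ⟨k, hk⟩ := Triangle.yoneda_exact₃ T hT (g - g') hz
    rw [h2 k, comp_zero] at hk
    exact sub_eq_zero.1 hk
  · intro u
    obtain ⟨g, hg⟩ := Triangle.yoneda_exact₂ T hT u (h1 _)
    exact ⟨g, hg.symm⟩

lemma precomp₁_bij (T : Triangle E) (hT : T ∈ distTriang E) (L : E)
    (h3 : ∀ f : T.obj₃ ⟶ L, f = 0) (h4 : ∀ f : T.obj₃⟦(-1:ℤ)⟧ ⟶ L, f = 0) :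
    Function.Bijective (fun g : T.obj₂ ⟶ L => T.mor₁ ≫ g) := by
  have := precomp₂_bij T.invRotate (inv_rot_of_distTriang T hT) L h4 ?_
  · exact this
  · intro f
    have e : T.obj₃⟦(-1:ℤ)⟧⟦(1:ℤ)⟧ ≅ T.obj₃ :=
      (shiftFunctorCompIsoId E (-1) 1 (by ring)).app T.obj₃
    have : e.inv ≫ f = 0 := h3 _
    exact (cancel_epi e.inv).1 (this.trans comp_zero.symm)

variable {A : Type*} [Category A] [Abelian A]

lemma H_iso₂ (H : E ⥤ A) [H.IsHomological]
    (T : Triangle E) (hT : T ∈ distTriang E)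
    (h1 : IsZero (H.obj T.obj₁)) (h2 : IsZero (H.obj (T.obj₁⟦(1:ℤ)⟧))) :
    IsIso (H.map T.mor₂) := by
  have e1 := H.map_distinguished_exact T hT
  have e2 := H.map_distinguished_exact _ (rot_of_distTriang T hT)
  have m : Mono (H.map T.mor₂) := e1.mono_g (h1.eq_of_src _ _)
  have ep : Epi (H.map T.mor₂) := e2.epi_f (h2.eq_of_tgt _ _)
  exact isIso_of_mono_of_epi _

lemma H_iso₁ (H : E ⥤ A) [H.IsHomological]
    (T : Triangle E) (hT : T ∈ distTriang E)
    (h1 : IsZero (H.obj T.obj₃)) (h2 : IsZero (H.obj (T.obj₃⟦(-1:ℤ)⟧))) :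
    IsIso (H.map T.mor₁) := by
  have := H_iso₂ H T.invRotate (inv_rot_of_distTriang T hT) h2 ?_
  · exact this
  · exact h1.of_iso (H.mapIso ((shiftFunctorCompIsoId E (-1) 1 (by ring)).app T.obj₃))

lemma ge_zero_crit (t : TStructure E) {Z : E}
    (hZ : ∀ U, t.le (-1) U → ∀ u : U ⟶ Z, u = 0) : t.ge 0 Z := by
  obtain ⟨Ao, B, hA, hB, f, g, h', mem⟩ := t.exists_triangle Z (-1) 0 (by ring)
  have hf : f = 0 := hZ _ hA f
  have hA0 : IsZero Ao := by
    rw [IsZero.iff_id_eq_zero]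
    obtain ⟨ψ, hψ⟩ := Triangle.coyoneda_exact₂ (Triangle.mk f g h').invRotate
      (inv_rot_of_distTriang _ mem) (𝟙 Ao) (by change 𝟙 Ao ≫ f = 0; rw [id_comp, hf])
    have hψ0 : ψ = 0 := tzero t (show (-1:ℤ) < 1 by norm_num) hA
      (t.ge_shift 0 (-1) 1 (by ring) B hB) ψ
    rw [hψ, hψ0, zero_comp]; rfl
  haveI : IsIso (Triangle.mk f g h').mor₂ :=
    (Triangle.isZero₁_iff_isIso₂ _ mem).1 hA0
  exact (t.ge 0).prop_of_iso (asIso (Triangle.mk f g h').mor₂).symm hB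

lemma le_zero_crit (t : TStructure E) {Z : E}
    (hZ : ∀ U, t.ge 1 U → ∀ u : Z ⟶ U, u = 0) : t.le 0 Z := by
  obtain ⟨Ao, B, hA, hB, f, g, h', mem⟩ := t.exists_triangle Z 0 1 (by ring)
  have hg : g = 0 := hZ _ hB g
  have hB0 : IsZero B := by
    rw [IsZero.iff_id_eq_zero]
    obtain ⟨ψ, hψ⟩ := Triangle.yoneda_exact₃ (Triangle.mk f g h') mem (𝟙 B)
      (by change g ≫ 𝟙 B = 0; rw [hg, zero_comp])
    have hψ0 : ψ = 0 := tzero t (show (-1:ℤ) < 1 by norm_num)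
      (t.le_shift 0 1 (-1) (by ring) Ao hA) hB ψ
    rw [hψ, hψ0, comp_zero]; rfl
  haveI : IsIso (Triangle.mk f g h').mor₁ :=
    (Triangle.isZero₃_iff_isIso₁ _ mem).1 hB0
  exact (t.le 0).prop_of_iso (@asIso _ _ _ _ _ this) hA

lemma bij_cancel_right {α β γ : Sort*} {ψ : β → γ} {c : α → β}
    (hc : Function.Bijective c) (h : Function.Bijective (fun a => ψ (c a))) :
    Function.Bijective ψ := by
  constructor
  · intro x y hxy
    obtain ⟨x', rfl⟩ := hc.2 x
    obtain ⟨y', rfl⟩ := hc.2 y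
    rw [show x' = y' from h.1 hxy]
  · intro z
    obtain ⟨a, ha⟩ := h.2 z
    exact ⟨c a, ha⟩

lemma bij_cancel_left {α β γ : Sort*} {ψ : α → β} {c : β → γ}
    (hc : Function.Bijective c) (h : Function.Bijective (fun a => c (ψ a))) :
    Function.Bijective ψ := by
  constructor
  · intro x y hxy
    exact h.1 (congrArg c hxy)
  · intro b
    obtain ⟨a, ha⟩ := h.2 (c b)
    exact ⟨a, hc.1 ha⟩


lemma precomp_iso_bij {E' : Type*} [Category E'] {X Y Z : E'} (i : X ≅ Y) :
    Function.Bijective (fun u : Y ⟶ Z => i.hom ≫ u) := by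
  constructor
  · intro a b hab
    simp only at hab
    have := congrArg (fun t => i.inv ≫ t) hab
    simpa using this
  · intro v
    exact ⟨i.inv ≫ v, by simp⟩

end Statement17Aux


open Statement17Aux in
/-- Let `F : T ⥤ S` be an exact functor between triangulated categories
with t-structures, both having derived injectives. If `F` admits a t-exact left adjoint
`G`, then `F` preserves derived injectives: for every injective `I` of `T^♥` and every
derived injective `LI` associated to `I`, the object `F(LI)` is a derived injective
associated to `F^♥(I) = H⁰(F(I))` (which is injective in `S^♥`); in particular
`F(L_T(I)) ≅ L_S(F^♥(I))` and `F` restricts to a functor `DGInj(T) → DGInj(S)`. -/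
theorem statement17 {D : Type u₂} [Category.{v₂} D] [Preadditive D] [HasZeroObject D]
    [HasShift D ℤ] [∀ n : ℤ, (shiftFunctor D n).Additive] [Pretriangulated D]
    (tC : TStructure C) (tD : TStructure D)
    [Abelian (THeart tC)] [Abelian (THeart tD)]
    (hC : TCohomology tC) (hD : TCohomology tD)
    (hDIC : ∀ I : THeart tC, Injective I → ∃ LI : C, IsDerivedInjective tC hC I LI)
    (hDID : ∀ I : THeart tD, Injective I → ∃ LI : D, IsDerivedInjective tD hD I LI)
    (F : C ⥤ D) (G : D ⥤ C)
    [F.CommShift ℤ] [F.IsTriangulated] [G.CommShift ℤ] [G.IsTriangulated]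
    (adj : G ⊣ F)
    (hGle : ∀ (n : ℤ) (Y : D), tD.le n Y → tC.le n (G.obj Y))
    (hGge : ∀ (n : ℤ) (Y : D), tD.ge n Y → tC.ge n (G.obj Y))
    (I : THeart tC) (hI : Injective I)
    (LI : C) (hLI : IsDerivedInjective tC hC I LI) :
    Injective (hD.H.obj (F.obj I.obj)) ∧
      IsDerivedInjective tD hD (hD.H.obj (F.obj I.obj)) (F.obj LI) := by
  classical
  obtain ⟨e, he⟩ := hLI
  haveI := hC.homological
  haveI := hD.homological
  haveI := hC.homological.toPreservesZeroMorphisms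
  haveI := hD.homological.toPreservesZeroMorphisms
  have Hmap0D : ∀ (X : D) (Y : D), hD.H.map (0 : X ⟶ Y) = 0 := fun _ _ => hD.H.map_zero _ _
  have Hmap0C : ∀ (X : C) (Y : C), hC.H.map (0 : X ⟶ Y) = 0 := fun _ _ => hC.H.map_zero _ _
  have homEquivD_zero : ∀ (U : D) (Z : C), (adj.homEquiv U Z) 0 = 0 := by
    intro U Z
    simp [Adjunction.homEquiv_apply]
  have ZC_le : ∀ U : C, tC.le (-1) U → ∀ u : U ⟶ LI, u = 0 := by
    intro U hU u
    apply (e U).injective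
    exact (hC.zero_of_le U hU).eq_of_src _ _
  have ZC_ge : ∀ U : C, tC.ge 1 U → ∀ u : U ⟶ LI, u = 0 := by
    intro U hU u
    apply (e U).injective
    exact (hC.zero_of_ge U hU).eq_of_src _ _
  have ZD_le : ∀ U : D, tD.le (-1) U → ∀ u : U ⟶ F.obj LI, u = 0 := by
    intro U hU u
    have h0 : (adj.homEquiv U LI).symm u = 0 := ZC_le _ (hGle _ _ hU) _
    have h1 : u = (adj.homEquiv U LI) ((adj.homEquiv U LI).symm u) :=
      (Equiv.apply_symm_apply _ _).symm
    rw [h1, h0, homEquivD_zero]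
  have ZD_ge : ∀ U : D, tD.ge 1 U → ∀ u : U ⟶ F.obj LI, u = 0 := by
    intro U hU u
    have h0 : (adj.homEquiv U LI).symm u = 0 := ZC_ge _ (hGge _ _ hU) _
    have h1 : u = (adj.homEquiv U LI) ((adj.homEquiv U LI).symm u) :=
      (Equiv.apply_symm_apply _ _).symm
    rw [h1, h0, homEquivD_zero]
  have ZFI_le : ∀ U : D, tD.le (-1) U → ∀ u : U ⟶ F.obj I.obj, u = 0 := by
    intro U hU u
    have h0 : (adj.homEquiv U I.obj).symm u = 0 :=
      tzero tC (show (-1:ℤ) < 0 by norm_num) (hGle _ _ hU) I.property.2 _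
    have h1 : u = (adj.homEquiv U I.obj) ((adj.homEquiv U I.obj).symm u) :=
      (Equiv.apply_symm_apply _ _).symm
    rw [h1, h0, homEquivD_zero]
  have hFLIge : tD.ge 0 (F.obj LI) := ge_zero_crit tD ZD_le
  have hFIge : tD.ge 0 (F.obj I.obj) := ge_zero_crit tD ZFI_le
  let GH : THeart tD → THeart tC := fun W =>
    ⟨G.obj W.obj, hGle 0 _ W.property.1, hGge 0 _ W.property.2⟩
  -- lifting of monomorphisms of the heart against the aisle
  have mono_lift : ∀ (X Y : THeart tD) (f : X ⟶ Y), Mono f → ∀ (V : D), tD.le 0 V →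
      ∀ v : V ⟶ X.obj, v ≫ (THeartIncl tD).map f = 0 → v = 0 := by
    intro X Y f hf V hV v hv
    haveI := hf
    have b := hD.bij_le V X hV
    have hnat : hD.H.map ((THeartIncl tD).map f) ≫ hD.restriction.hom.app Y
        = hD.restriction.hom.app X ≫ f := hD.restriction.hom.naturality f
    have key : (hD.H.map v ≫ hD.restriction.hom.app X) ≫ f = 0 := by
      rw [assoc, ← hnat, ← assoc, ← Functor.map_comp, hv, Functor.map_zero, zero_comp]
    have key2 : hD.H.map v ≫ hD.restriction.hom.app X = 0 := zero_of_comp_mono f key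
    apply b.1
    show hD.H.map v ≫ hD.restriction.hom.app X = hD.H.map 0 ≫ hD.restriction.hom.app X
    rw [key2, Functor.map_zero, zero_comp]
  -- the key representability of `Hom(H⁰(-), H⁰(F I))` via `F LI` on the heart
  have hKey : ∃ ε' : hD.H.obj (F.obj LI) ⟶ hD.H.obj (F.obj I.obj),
      ∀ (W : D), tD.le 0 W → tD.ge 0 W →
        Function.Bijective (fun f : W ⟶ F.obj LI => hD.H.map f ≫ ε') := by
    let E1 : ∀ W : THeart tD, (W.obj ⟶ F.obj LI) ≃ (W ⟶ hD.H.obj (F.obj LI)) :=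
      fun W => Equiv.ofBijective _ (hD.bij_ge (F.obj LI) W hFLIge)
    let E2 : ∀ W : THeart tD, (W.obj ⟶ F.obj LI) ≃ (G.obj W.obj ⟶ LI) :=
      fun W => (adj.homEquiv W.obj LI).symm
    let E3 : ∀ W : THeart tD, (G.obj W.obj ⟶ LI) ≃ (hC.H.obj (G.obj W.obj) ⟶ I) :=
      fun W => e (G.obj W.obj)
    let E4 : ∀ W : THeart tD, ((hC.H.obj (G.obj W.obj)) ⟶ I) ≃ ((GH W) ⟶ I) :=
      fun W =>
        { toFun := fun v => hC.restriction.inv.app (GH W) ≫ v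
          invFun := fun v => hC.restriction.hom.app (GH W) ≫ v
          left_inv := fun v => by
            show hC.restriction.hom.app (GH W) ≫ hC.restriction.inv.app (GH W) ≫ v = v
            rw [← assoc, Iso.hom_inv_id_app, id_comp]
          right_inv := fun v => by
            show hC.restriction.inv.app (GH W) ≫ hC.restriction.hom.app (GH W) ≫ v = v
            rw [← assoc, Iso.inv_hom_id_app, id_comp] }
    let E5 : ∀ W : THeart tD, ((GH W) ⟶ I) ≃ (W.obj ⟶ F.obj I.obj) :=
      fun W => InducedCategory.homEquiv.trans (adj.homEquiv W.obj I.obj)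
    let E6 : ∀ W : THeart tD, (W.obj ⟶ F.obj I.obj) ≃ (W ⟶ hD.H.obj (F.obj I.obj)) :=
      fun W => Equiv.ofBijective _ (hD.bij_ge (F.obj I.obj) W hFIge)
    let TE : ∀ W : THeart tD, (W ⟶ hD.H.obj (F.obj LI)) ≃ (W ⟶ hD.H.obj (F.obj I.obj)) :=
      fun W => (E1 W).symm.trans ((E2 W).trans ((E3 W).trans ((E4 W).trans
        ((E5 W).trans (E6 W)))))
    have nat : ∀ (W W' : THeart tD) (w : W' ⟶ W) (g : W ⟶ hD.H.obj (F.obj LI)),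
        TE W' (w ≫ g) = w ≫ TE W g := by
      intro W W' w g
      have n1 : (E1 W').symm (w ≫ g) = (THeartIncl tD).map w ≫ (E1 W).symm g := by
        apply (E1 W').injective
        rw [Equiv.apply_symm_apply]
        symm
        show hD.restriction.inv.app W' ≫ hD.H.map ((THeartIncl tD).map w ≫ (E1 W).symm g)
          = w ≫ g
        have hnat : w ≫ hD.restriction.inv.app W
            = hD.restriction.inv.app W' ≫ hD.H.map ((THeartIncl tD).map w) :=
          hD.restriction.inv.naturality w
        have h2 : hD.restriction.inv.app W ≫ hD.H.map ((E1 W).symm g) = g :=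
          (E1 W).apply_symm_apply g
        rw [Functor.map_comp, ← assoc, ← hnat, assoc, h2]
      have n2 : ∀ v : W.obj ⟶ F.obj LI,
          (E2 W') ((THeartIncl tD).map w ≫ v)
            = G.map ((THeartIncl tD).map w) ≫ (E2 W) v :=
        fun v => adj.homEquiv_naturality_left_symm _ _
      have n3 : ∀ v : G.obj W.obj ⟶ LI,
          (E3 W') (G.map ((THeartIncl tD).map w) ≫ v)
            = hC.H.map (G.map ((THeartIncl tD).map w)) ≫ (E3 W) v :=
        fun v => he _ _ _ _
      have n4 : ∀ v : hC.H.obj (G.obj W.obj) ⟶ I,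
          (E4 W') (hC.H.map (G.map ((THeartIncl tD).map w)) ≫ v)
            = (show (GH W') ⟶ (GH W) from ObjectProperty.homMk (G.map ((THeartIncl tD).map w))) ≫ (E4 W) v := by
        intro v
        show hC.restriction.inv.app (GH W') ≫ hC.H.map (G.map ((THeartIncl tD).map w)) ≫ v
          = (show (GH W') ⟶ (GH W) from ObjectProperty.homMk (G.map ((THeartIncl tD).map w)))
              ≫ hC.restriction.inv.app (GH W) ≫ v
        have hnat : (show (GH W') ⟶ (GH W) from ObjectProperty.homMk (G.map ((THeartIncl tD).map w)))
              ≫ hC.restriction.inv.app (GH W)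
            = hC.restriction.inv.app (GH W') ≫ hC.H.map (G.map ((THeartIncl tD).map w)) :=
          hC.restriction.inv.naturality
            (show (GH W') ⟶ (GH W) from ObjectProperty.homMk (G.map ((THeartIncl tD).map w)))
        rw [← assoc, ← hnat, assoc]
      have n5 : ∀ v : (GH W) ⟶ I,
          (E5 W') ((show (GH W') ⟶ (GH W) from ObjectProperty.homMk (G.map ((THeartIncl tD).map w))) ≫ v)
            = (THeartIncl tD).map w ≫ (E5 W) v :=
        fun v => adj.homEquiv_naturality_left _ _
      have n6 : ∀ v : W.obj ⟶ F.obj I.obj,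
          (E6 W') ((THeartIncl tD).map w ≫ v) = w ≫ (E6 W) v := by
        intro v
        show hD.restriction.inv.app W' ≫ hD.H.map ((THeartIncl tD).map w ≫ v)
          = w ≫ (hD.restriction.inv.app W ≫ hD.H.map v)
        have hnat : w ≫ hD.restriction.inv.app W
            = hD.restriction.inv.app W' ≫ hD.H.map ((THeartIncl tD).map w) :=
          hD.restriction.inv.naturality w
        rw [Functor.map_comp, ← assoc, ← hnat, assoc]
      simp only [TE, Equiv.trans_apply]
      rw [n1, n2, n3, n4, n5, n6]
    refine ⟨TE (hD.H.obj (F.obj LI)) (𝟙 _), ?_⟩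
    have hcomp : ∀ (W : THeart tD) (g : W ⟶ hD.H.obj (F.obj LI)),
        TE W g = g ≫ TE (hD.H.obj (F.obj LI)) (𝟙 _) := by
      intro W g
      have hn := nat (hD.H.obj (F.obj LI)) W g (𝟙 _)
      rw [comp_id] at hn
      exact hn
    intro W hW1 hW2
    have hpsi : (fun f : W ⟶ F.obj LI => hD.H.map f ≫ TE (hD.H.obj (F.obj LI)) (𝟙 _))
        = (fun u : ((⟨W, hW1, hW2⟩ : THeart tD) ⟶ hD.H.obj (F.obj I.obj)) =>
            hD.restriction.hom.app ⟨W, hW1, hW2⟩ ≫ u)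
          ∘ (TE ⟨W, hW1, hW2⟩)
          ∘ (fun f : W ⟶ F.obj LI =>
              hD.restriction.inv.app ⟨W, hW1, hW2⟩ ≫ hD.H.map f) := by
      funext f
      show hD.H.map f ≫ TE (hD.H.obj (F.obj LI)) (𝟙 _)
        = hD.restriction.hom.app ⟨W, hW1, hW2⟩
            ≫ TE ⟨W, hW1, hW2⟩ (hD.restriction.inv.app ⟨W, hW1, hW2⟩ ≫ hD.H.map f)
      rw [hcomp ⟨W, hW1, hW2⟩ (hD.restriction.inv.app ⟨W, hW1, hW2⟩ ≫ hD.H.map f),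
        ← assoc, ← assoc, Iso.hom_inv_id_app, id_comp]
    rw [hpsi]
    exact (precomp_iso_bij (hD.restriction.app ⟨W, hW1, hW2⟩)).comp
      ((TE ⟨W, hW1, hW2⟩).bijective.comp (hD.bij_ge (F.obj LI) ⟨W, hW1, hW2⟩ hFLIge))
  obtain ⟨eps, heps⟩ := hKey
  -- bijectivity on the left aisle
  have bijLE : ∀ X : D, tD.le 0 X →
      Function.Bijective (fun f : X ⟶ F.obj LI => hD.H.map f ≫ eps) := by
    intro X hX
    obtain ⟨Y₁, Y₂, hY₁, hY₂, a, p, c, mem⟩ := tD.exists_triangle X (-1) 0 (by ring)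
    have hY₁' : tD.le (-1) (Y₁⟦(1:ℤ)⟧) :=
      tD.le_monotone (show (-2:ℤ) ≤ -1 by norm_num) _
        (tD.le_shift (-1) 1 (-2) (by ring) _ hY₁)
    have hY₂le : tD.le 0 Y₂ := by
      apply le_zero_crit tD
      intro U hU φ
      have h1 : (Triangle.mk a p c).mor₂ ≫ φ = 0 :=
        tzero tD (show (0:ℤ) < 1 by norm_num) hX hU _
      obtain ⟨ψ, hψ⟩ := Triangle.yoneda_exact₃ _ mem φ h1
      rw [hψ, tzero tD (show (-1:ℤ) < 1 by norm_num) hY₁' hU ψ]; exact comp_zero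
    have hpre : Function.Bijective (fun g : Y₂ ⟶ F.obj LI => p ≫ g) :=
      precomp₂_bij (Triangle.mk a p c) mem (F.obj LI)
        (fun f => ZD_le Y₁ hY₁ f) (fun f => ZD_le _ hY₁' f)
    haveI hHp : IsIso (hD.H.map p) :=
      H_iso₂ hD.H (Triangle.mk a p c) mem (hD.zero_of_le Y₁ hY₁) (hD.zero_of_le _ hY₁')
    have hcombined : Function.Bijective
        (fun g : Y₂ ⟶ F.obj LI => hD.H.map (p ≫ g) ≫ eps) := by
      have heq : (fun g : Y₂ ⟶ F.obj LI => hD.H.map (p ≫ g) ≫ eps)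
          = (fun v : hD.H.obj Y₂ ⟶ hD.H.obj (F.obj I.obj) => hD.H.map p ≫ v)
            ∘ (fun g : Y₂ ⟶ F.obj LI => hD.H.map g ≫ eps) := by
        funext g
        show hD.H.map (p ≫ g) ≫ eps = hD.H.map p ≫ (hD.H.map g ≫ eps)
        rw [Functor.map_comp, assoc]
      rw [heq]
      exact (precomp_iso_bij (asIso (hD.H.map p))).comp (heps Y₂ hY₂le hY₂)
    exact bij_cancel_right hpre hcombined
  -- bijectivity everywhere
  have bijAll : ∀ X : D,
      Function.Bijective (fun f : X ⟶ F.obj LI => hD.H.map f ≫ eps) := by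
    intro X
    obtain ⟨A', B, hA, hB, a, p, c, mem⟩ := tD.exists_triangle X 0 1 (by ring)
    have hB' : tD.ge 1 (B⟦(-1:ℤ)⟧) :=
      tD.ge_antitone (show (1:ℤ) ≤ 2 by norm_num) _ (tD.ge_shift 1 (-1) 2 (by ring) _ hB)
    have hpre : Function.Bijective (fun g : X ⟶ F.obj LI => a ≫ g) :=
      precomp₁_bij (Triangle.mk a p c) mem (F.obj LI)
        (fun f => ZD_ge B hB f) (fun f => ZD_ge _ hB' f)
    haveI hHa : IsIso (hD.H.map a) :=
      H_iso₁ hD.H (Triangle.mk a p c) mem (hD.zero_of_ge B hB) (hD.zero_of_ge _ hB')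
    have hcombined : Function.Bijective
        (fun g : X ⟶ F.obj LI => hD.H.map a ≫ (hD.H.map g ≫ eps)) := by
      have heq : (fun g : X ⟶ F.obj LI => hD.H.map a ≫ (hD.H.map g ≫ eps))
          = (fun f : A' ⟶ F.obj LI => hD.H.map f ≫ eps)
            ∘ (fun g : X ⟶ F.obj LI => a ≫ g) := by
        funext g
        show hD.H.map a ≫ (hD.H.map g ≫ eps) = hD.H.map (a ≫ g) ≫ eps
        rw [Functor.map_comp, assoc]
      rw [heq]
      exact (bijLE A' hA).comp hpre
    exact bij_cancel_left (precomp_iso_bij (asIso (hD.H.map a))) hcombined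
  -- injectivity of H⁰(F I)
  have hInj : Injective (hD.H.obj (F.obj I.obj)) := by
    constructor
    intro X Y g f hf
    haveI := hf
    let K5 : ∀ W : THeart tD, ((GH W) ⟶ I) ≃ (W.obj ⟶ F.obj I.obj) :=
      fun W => InducedCategory.homEquiv.trans (adj.homEquiv W.obj I.obj)
    let K6 : ∀ W : THeart tD, (W.obj ⟶ F.obj I.obj) ≃ (W ⟶ hD.H.obj (F.obj I.obj)) :=
      fun W => Equiv.ofBijective _ (hD.bij_ge (F.obj I.obj) W hFIge)
    let chi : ∀ W : THeart tD, ((GH W) ⟶ I) ≃ (W ⟶ hD.H.obj (F.obj I.obj)) :=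
      fun W => (K5 W).trans (K6 W)
    have chinat : ∀ (W W' : THeart tD) (w : W' ⟶ W) (v : (GH W) ⟶ I),
        chi W' ((show (GH W') ⟶ (GH W) from ObjectProperty.homMk (G.map ((THeartIncl tD).map w))) ≫ v)
          = w ≫ chi W v := by
      intro W W' w v
      have n5 : (K5 W')
            ((show (GH W') ⟶ (GH W) from ObjectProperty.homMk (G.map ((THeartIncl tD).map w))) ≫ v)
          = (THeartIncl tD).map w ≫ (K5 W) v :=
        adj.homEquiv_naturality_left _ _
      have n6 : ∀ u : W.obj ⟶ F.obj I.obj,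
          (K6 W') ((THeartIncl tD).map w ≫ u)
            = w ≫ (K6 W) u := by
        intro u
        show hD.restriction.inv.app W' ≫ hD.H.map ((THeartIncl tD).map w ≫ u)
          = w ≫ (hD.restriction.inv.app W ≫ hD.H.map u)
        have hnat : w ≫ hD.restriction.inv.app W
            = hD.restriction.inv.app W' ≫ hD.H.map ((THeartIncl tD).map w) :=
          hD.restriction.inv.naturality w
        rw [Functor.map_comp, ← assoc, ← hnat, assoc]
      simp only [chi, Equiv.trans_apply]
      rw [n5, n6]
    -- the cone of f in D is in the coaisle
    obtain ⟨Cf, u, δ, hT⟩ := distinguished_cocone_triangle ((THeartIncl tD).map f)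
    have hCfge : tD.ge 0 Cf := by
      apply ge_zero_crit tD
      intro U hU φ
      have h31 : δ ≫ (shiftFunctor D (1:ℤ)).map ((THeartIncl tD).map f) = 0 :=
        comp_distTriang_mor_zero₃₁ _ hT
      have hφδ : φ ≫ δ = 0 := by
        have hcz : (φ ≫ δ) ≫ (shiftFunctor D (1:ℤ)).map ((THeartIncl tD).map f) = 0 := by
          rw [assoc, h31, comp_zero]
        have hν : ((shiftFunctor D (-1:ℤ)).map (φ ≫ δ)
              ≫ (shiftFunctorCompIsoId D 1 (-1) (by ring)).hom.app X.obj)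
            ≫ (THeartIncl tD).map f = 0 := by
          have hnatσ : (shiftFunctor D (-1:ℤ)).map
                ((shiftFunctor D (1:ℤ)).map ((THeartIncl tD).map f))
              ≫ (shiftFunctorCompIsoId D 1 (-1) (by ring)).hom.app Y.obj
              = (shiftFunctorCompIsoId D 1 (-1) (by ring)).hom.app X.obj
                ≫ (THeartIncl tD).map f :=
            (shiftFunctorCompIsoId D 1 (-1) (by ring)).hom.naturality _
          rw [assoc, ← hnatσ, ← assoc, ← Functor.map_comp, hcz, Functor.map_zero, zero_comp]
        have hν0 : (shiftFunctor D (-1:ℤ)).map (φ ≫ δ)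
            ≫ (shiftFunctorCompIsoId D 1 (-1) (by ring)).hom.app X.obj = 0 :=
          mono_lift X Y f hf (U⟦(-1:ℤ)⟧) (tD.le_shift (-1) (-1) 0 (by ring) U hU) _ hν
        have hz2 : (shiftFunctor D (-1:ℤ)).map (φ ≫ δ) = 0 := by
          have hcongr := congrArg
            (fun t => t ≫ (shiftFunctorCompIsoId D 1 (-1) (by ring)).inv.app X.obj) hν0
          simpa using hcongr
        apply (shiftFunctor D (-1:ℤ)).map_injective
        rw [hz2, Functor.map_zero]
      obtain ⟨ψ, hψ⟩ := Triangle.coyoneda_exact₃ _ hT φ hφδ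
      rw [hψ, tzero tD (show (-1:ℤ) < 0 by norm_num) hU Y.property.2 ψ]; exact zero_comp
    -- mono of H(G f)
    have hTG := G.map_distinguished _ hT
    have hmonoH : Mono (hC.H.map (G.map ((THeartIncl tD).map f))) := by
      have hexact := hC.H.map_distinguished_exact _ (inv_rot_of_distTriang _ hTG)
      have hz : IsZero (hC.H.obj ((G.obj Cf)⟦(-1:ℤ)⟧)) :=
        hC.zero_of_ge _ (tC.ge_shift 0 (-1) 1 (by ring) _ (hGge 0 Cf hCfge))
      exact hexact.mono_g (hz.eq_of_src _ _)
    have hGfmono : Mono (show (GH X) ⟶ (GH Y) from ObjectProperty.homMk (G.map ((THeartIncl tD).map f))) := by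
      have hnat : hC.H.map (G.map ((THeartIncl tD).map f))
            ≫ hC.restriction.hom.app (GH Y)
          = hC.restriction.hom.app (GH X)
            ≫ (show (GH X) ⟶ (GH Y) from ObjectProperty.homMk (G.map ((THeartIncl tD).map f))) :=
        hC.restriction.hom.naturality
          (show (GH X) ⟶ (GH Y) from ObjectProperty.homMk (G.map ((THeartIncl tD).map f)))
      have heq : (show (GH X) ⟶ (GH Y) from ObjectProperty.homMk (G.map ((THeartIncl tD).map f)))
          = hC.restriction.inv.app (GH X) ≫ hC.H.map (G.map ((THeartIncl tD).map f))
              ≫ hC.restriction.hom.app (GH Y) := by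
        rw [hnat, ← assoc, Iso.inv_hom_id_app, id_comp]
      rw [heq]
      haveI := hmonoH
      haveI : Mono (hC.restriction.hom.app (GH Y)) := by
        haveI : IsIso (hC.restriction.hom.app (GH Y)) := inferInstance
        exact IsIso.mono_of_iso _
      haveI : Mono (hC.restriction.inv.app (GH X)) := by
        haveI : IsIso (hC.restriction.inv.app (GH X)) := inferInstance
        exact IsIso.mono_of_iso _
      infer_instance
    haveI := hGfmono
    obtain ⟨k, hk⟩ := hI.factors ((chi X).symm g)
      (show (GH X) ⟶ (GH Y) from ObjectProperty.homMk (G.map ((THeartIncl tD).map f)))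
    have hn := chinat Y X f k
    rw [hk, Equiv.apply_symm_apply] at hn
    exact ⟨chi Y k, hn.symm⟩
  refine ⟨hInj, ⟨fun X => Equiv.ofBijective _ (bijAll X), fun X Y f g => ?_⟩⟩
  show hD.H.map (f ≫ g) ≫ eps = hD.H.map f ≫ (hD.H.map g ≫ eps)
  rw [Functor.map_comp, assoc]
end

section
/- Let T be a triangulated category with a t-structure which has derived projectives. Then T^− = ∪_{n≥0} T_{≤ n}, with its induced t-structure, also has derived projectives, and the full subcategory of derived projectives of T^− coincides with that of T: DGProj(T^−) = DGProj(T). -/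
open CategoryTheory Category Limits Pretriangulated Triangulated

universe v u

variable {C : Type u} [Category.{v} C] [Preadditive C] [HasZeroObject C]
  [HasShift C ℤ] [∀ n : ℤ, (shiftFunctor C n).Additive] [Pretriangulated C]

/-- `SP ∈ T⁻` is a derived projective associated to `P ∈ T^♥` *relative to the subcategory
`T⁻ = ∪_{n≥0} T_{≤n}` with its induced t-structure* (whose heart is again `T^♥`) when it
represents `T^♥(P, H⁰(-))` on objects of `T⁻`. -/
def IsDerivedProjectiveOnMinus (t : TStructure C) [Abelian (THeart t)] (h : TCohomology t)
    (P : THeart t) (SP : C) : Prop :=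
  (∃ n : ℕ, t.le (n : ℤ) SP) ∧
  ∃ e : ∀ X : C, (∃ m : ℕ, t.le (m : ℤ) X) → ((SP ⟶ X) ≃ (P ⟶ h.H.obj X)),
    ∀ (X Y : C) (hX : ∃ m : ℕ, t.le (m : ℤ) X) (hY : ∃ m : ℕ, t.le (m : ℤ) Y)
      (f : X ⟶ Y) (g : SP ⟶ X), e Y hY (g ≫ f) = e X hX g ≫ h.H.map f

attribute [local instance 10000] Abelian.toPreadditive

/-! ### Auxiliary lemmas -/

section Aux

variable (t : TStructure C)

/-- A morphism from an object `≤ a` to an object `≥ b` with `a < b` vanishes. -/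
lemma aux_zero {X Y : C} (f : X ⟶ Y) (a b : ℤ) (hab : a < b)
    (hX : t.le a X) (hY : t.ge b Y) : f = 0 := by
  have h1 : t.le 0 (X⟦a⟧) := t.le_shift a a 0 (add_zero a) X hX
  have h2 : t.ge (b - a) (Y⟦a⟧) := t.ge_shift b a (b - a) (by omega) Y hY
  have h3 : t.ge 1 (Y⟦a⟧) := t.ge_antitone (by omega) _ h2
  have h4 : (shiftFunctor C a).map f = 0 := t.zero' _ h1 h3
  rwa [Functor.map_eq_zero_iff] at h4

/-- An object which is left orthogonal to all objects `≥ 1` is `≤ 0`. -/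
lemma aux_le_zero_of_orthogonal (X : C)
    (hX : ∀ (Y : C), t.ge 1 Y → ∀ g : X ⟶ Y, g = 0) : t.le 0 X := by
  obtain ⟨A, B, hA, hB, f, g, w, mem⟩ := t.exists_triangle X 0 1 rfl
  have hg : g = 0 := hX B hB g
  obtain ⟨q, hq⟩ := Pretriangulated.Triangle.yoneda_exact₃ _ mem (𝟙 B)
    (by change g ≫ 𝟙 B = 0; rw [hg, zero_comp])
  have hq0 : q = 0 :=
    aux_zero t q (-1) 1 (by omega) (t.le_shift 0 1 (-1) (by omega) A hA) hB
  have hB0 : IsZero B := by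
    rw [IsZero.iff_id_eq_zero, hq, hq0]
    exact comp_zero
  have hf : IsIso f :=
    (Pretriangulated.Triangle.isZero₃_iff_isIso₁ _ mem).1 hB0
  exact (t.le 0).prop_of_iso (asIso f) hA

variable [Abelian (THeart t)] (h : TCohomology t)

lemma aux_epi_H {T : Pretriangulated.Triangle C} (hT : T ∈ distTriang C)
    (h3 : IsZero (h.H.obj T.obj₃)) : Epi (h.H.map T.mor₁) := by
  letI : h.H.IsHomological := h.homological
  exact (h.H.map_distinguished_exact T hT).epi_f (h3.eq_of_tgt _ _)

lemma aux_mono_H {T : Pretriangulated.Triangle C} (hT : T ∈ distTriang C)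
    (h1 : IsZero (h.H.obj (T.obj₃⟦(-1 : ℤ)⟧))) : Mono (h.H.map T.mor₁) := by
  letI : h.H.IsHomological := h.homological
  exact (h.H.map_distinguished_exact _ (inv_rot_of_distTriang T hT)).mono_g
    (h1.eq_of_src _ _)

/-- A derived projective of `T` kills objects `≥ 1`. -/
lemma aux_hom_zero {P : THeart t} {SP : C}
    (e : ∀ X : C, (SP ⟶ X) ≃ (P ⟶ h.H.obj X)) (Y : C) (hY : t.ge 1 Y)
    (f : SP ⟶ Y) : f = 0 := by
  apply (e Y).injective
  exact (h.zero_of_ge Y hY).eq_of_tgt _ _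

end Aux

/-- Let `C` be a triangulated category with a t-structure `t` which has
derived projectives. Then `T⁻ = ∪_{n≥0} T_{≤n}`, with its induced t-structure (whose heart
is again `T^♥`), also has derived projectives, and `DGProj(T⁻) = DGProj(T)`: every derived
projective of `T` lies in `T⁻` and is a derived projective of `T⁻`, and conversely every
derived projective of `T⁻` is a derived projective of `T`. -/
theorem statement18 (t : TStructure C) [Abelian (THeart t)] (h : TCohomology t)
    (hDP : ∀ P : THeart t, Projective P → ∃ SP : C, IsDerivedProjective t h P SP) :
    -- `T⁻` has derived projectives
    (∀ P : THeart t, Projective P → ∃ SP : C, IsDerivedProjectiveOnMinus t h P SP) ∧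
    -- `DGProj(T) ⊆ DGProj(T⁻)`: derived projectives of `T` lie in `T⁻` and are derived
    -- projectives for the induced t-structure on `T⁻`
    (∀ (P : THeart t), Projective P → ∀ SP : C, IsDerivedProjective t h P SP →
      IsDerivedProjectiveOnMinus t h P SP) ∧
    -- `DGProj(T⁻) ⊆ DGProj(T)`: derived projectives of `T⁻` are derived projectives of `T`
    (∀ (P : THeart t), Projective P → ∀ SP : C, IsDerivedProjectiveOnMinus t h P SP →
      IsDerivedProjective t h P SP) := by
  have part2 : ∀ (P : THeart t), Projective P → ∀ SP : C, IsDerivedProjective t h P SP →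
      IsDerivedProjectiveOnMinus t h P SP := by
    intro P _ SP hSP
    obtain ⟨e, he⟩ := hSP
    refine ⟨⟨0, ?_⟩, ⟨fun X _ => e X, fun X Y _ _ f g => he X Y f g⟩⟩
    rw [Nat.cast_zero]
    exact aux_le_zero_of_orthogonal t SP (fun Y hY g => aux_hom_zero t h e Y hY g)
  have part3 : ∀ (P : THeart t), Projective P → ∀ SP : C, IsDerivedProjectiveOnMinus t h P SP →
      IsDerivedProjective t h P SP := by
    intro P _ SP hSP
    obtain ⟨⟨n, hn⟩, e, he⟩ := hSP
    -- choose truncation triangles `A X ⟶ X ⟶ B X` with `A X ≤ n` and `B X ≥ n + 1`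
    choose A B hA hB f gg ww mem using fun X : C => t.exists_triangle X (n : ℤ) ((n : ℤ) + 1) rfl
    -- `Hom(SP, -)` vanishes on objects `≥ n + 1`
    have hzero : ∀ (Y : C), t.ge ((n : ℤ) + 1) Y → ∀ u : SP ⟶ Y, u = 0 := fun Y hY u =>
      aux_zero t u (n : ℤ) ((n : ℤ) + 1) (by omega) hn hY
    have hBshift : ∀ X : C, t.ge ((n : ℤ) + 1) ((B X)⟦(-1 : ℤ)⟧) := fun X =>
      t.ge_antitone (by omega) _
        (t.ge_shift ((n : ℤ) + 1) (-1) ((n : ℤ) + 2) (by omega) (B X) (hB X))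
    -- composition with `f X` is a bijection `Hom(SP, A X) ≃ Hom(SP, X)`
    have hbij : ∀ X : C, Function.Bijective (fun u : SP ⟶ A X => u ≫ f X) := by
      intro X
      constructor
      · intro u v huv
        have hsub : (u - v) ≫ f X = 0 := by
          rw [Preadditive.sub_comp]
          rw [show u ≫ f X = v ≫ f X from huv, sub_self]
        obtain ⟨q, hq⟩ := Pretriangulated.Triangle.coyoneda_exact₂ _
          (inv_rot_of_distTriang _ (mem X)) (u - v) (by exact hsub)
        exact sub_eq_zero.1 (hq.trans (by rw [hzero _ (hBshift X) q]; exact zero_comp))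
      · intro v
        obtain ⟨u, hu⟩ := Pretriangulated.Triangle.coyoneda_exact₂ _ (mem X) v
          (hzero (B X) (hB X) _)
        exact ⟨u, hu.symm⟩
    -- `H` inverts `f X`
    have hiso : ∀ X : C, IsIso (h.H.map (f X)) := by
      intro X
      have h3 : IsZero (h.H.obj (B X)) :=
        h.zero_of_ge _ (t.ge_antitone (by omega) _ (hB X))
      have h1 : IsZero (h.H.obj ((B X)⟦(-1 : ℤ)⟧)) := h.zero_of_ge _
        (t.ge_antitone (by omega) _
          (t.ge_shift ((n : ℤ) + 1) (-1) ((n : ℤ) + 2) (by omega) (B X) (hB X)))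
      have hepi : Epi (h.H.map (f X)) := aux_epi_H t h (mem X) h3
      have hmono : Mono (h.H.map (f X)) := aux_mono_H t h (mem X) h1
      haveI : Balanced (THeart t) :=
        (fun (D : Type u) [Category.{v} D] [Abelian D] => (inferInstance : Balanced D)) (THeart t)
      exact isIso_of_mono_of_epi _
    -- assemble the natural bijection on all of `C`
    let e₁ : ∀ X : C, (SP ⟶ A X) ≃ (SP ⟶ X) := fun X => Equiv.ofBijective _ (hbij X)
    let e₂ : ∀ X : C, (P ⟶ h.H.obj (A X)) ≃ (P ⟶ h.H.obj X) := fun X =>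
      { toFun := fun p => p ≫ h.H.map (f X)
        invFun := fun p => have := hiso X; p ≫ inv (h.H.map (f X))
        left_inv := fun p => by have := hiso X; simp
        right_inv := fun p => by have := hiso X; simp }
    let E : ∀ X : C, (SP ⟶ X) ≃ (P ⟶ h.H.obj X) := fun X =>
      (e₁ X).symm.trans ((e (A X) ⟨n, hA X⟩).trans (e₂ X))
    refine ⟨E, ?_⟩
    intro X Y f' g
    -- the canonical factorizations
    have hu : ((e₁ X).symm g) ≫ f X = g := (e₁ X).apply_symm_apply g
    have hw0 : (f X ≫ f') ≫ gg Y = 0 := by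
      rw [Category.assoc]
      exact aux_zero t _ (n : ℤ) ((n : ℤ) + 1) (by omega) (hA X) (hB Y)
    obtain ⟨w', hw'⟩ : ∃ w' : A X ⟶ A Y, f X ≫ f' = w' ≫ f Y := Pretriangulated.Triangle.coyoneda_exact₂ _ (mem Y) (f X ≫ f') hw0
    have hw'' : w' ≫ f Y = f X ≫ f' := hw'.symm
    have hv : (e₁ Y).symm (g ≫ f') = (e₁ X).symm g ≫ w' := by
      rw [Equiv.symm_apply_eq]
      show g ≫ f' = ((e₁ X).symm g ≫ w') ≫ f Y
      rw [Category.assoc, hw'', ← Category.assoc, hu]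
    show (e (A Y) ⟨n, hA Y⟩) ((e₁ Y).symm (g ≫ f')) ≫ h.H.map (f Y)
        = ((e (A X) ⟨n, hA X⟩) ((e₁ X).symm g) ≫ h.H.map (f X)) ≫ h.H.map f'
    rw [hv, he (A X) (A Y) ⟨n, hA X⟩ ⟨n, hA Y⟩ w' ((e₁ X).symm g), Category.assoc,
      ← h.H.map_comp, hw'', h.H.map_comp, ← Category.assoc]
  refine ⟨fun P hP => ?_, part2, part3⟩
  obtain ⟨SP, hSP⟩ := hDP P hP
  exact ⟨SP, part2 P hP SP hSP⟩
end
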